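/- arXiv:0909.0578 — 5 statements merged into one kernel-verified Lean document; each statement's English description precedes it below -/
import Mathlib

section
/- Let Γ be a finite subgroup of SL₂(ℂ), let ρ : Γ → GL(ℂ²) be the natural (inclusion) representation, and let χᵢ be an irreducible complex character of Γ. Then the formal power series Σₙ mᵢ(n)·tⁿ ∈ ℂ⟦t⟧, where mᵢ(n) is the multiplicity of χᵢ in the n-th symmetric power Symⁿ(ρ), is a rational function: there exist polynomials N, D ∈ ℂ[t] with D(0) ≠ 0 such that D(t)·Σₙ mᵢ(n)tⁿ = N(t) in ℂ⟦t⟧. -/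
open Matrix Complex PowerSeries CategoryTheory

/-- The `k`-th column image polynomial used to define the symmetric power:
the image of the basis vector `e₁^k e₂^(n-k)` of `Symⁿ(ℂ²)` under the endomorphism
induced by `g`, written as a polynomial in `X 0 ↔ e₁`, `X 1 ↔ e₂`. -/
noncomputable def symPoly2 (n : ℕ) (g : Matrix (Fin 2) (Fin 2) ℂ) (k : Fin (n + 1)) :
    MvPolynomial (Fin 2) ℂ :=
  (MvPolynomial.C (g 0 0) * MvPolynomial.X 0 + MvPolynomial.C (g 1 0) * MvPolynomial.X 1) ^ (k : ℕ) *
  (MvPolynomial.C (g 0 1) * MvPolynomial.X 0 + MvPolynomial.C (g 1 1) * MvPolynomial.X 1) ^ (n - (k : ℕ))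

/-- The matrix of the endomorphism `Symⁿ(g)` induced by `g` on the `n`-th symmetric power
of `ℂ²`, in the basis of monomials `e₁^i e₂^(n-i)`, `i = 0, …, n`. -/
noncomputable def symMatrix2 (n : ℕ) (g : Matrix (Fin 2) (Fin 2) ℂ) :
    Matrix (Fin (n + 1)) (Fin (n + 1)) ℂ :=
  Matrix.of fun i k =>
    MvPolynomial.coeff (Finsupp.single 0 (i : ℕ) + Finsupp.single 1 (n - (i : ℕ)))
      (symPoly2 n g k)

/-- The multiplicity of the character `χ` in the `n`-th symmetric power of the natural
representation of `Γ ⊆ SL₂(ℂ)`: the inner product `(1/|Γ|)·Σ_{g∈Γ} χ_{Symⁿ}(g)·conj(χ(g))`. -/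
noncomputable def symMult2 (Γ : Subgroup (SpecialLinearGroup (Fin 2) ℂ)) [Fintype Γ]
    (χ : Γ → ℂ) (n : ℕ) : ℂ :=
  (Fintype.card Γ : ℂ)⁻¹ * ∑ g : Γ, (symMatrix2 n g.1.1).trace * (starRingEnd ℂ) (χ g)

noncomputable section
namespace SymAux

/-- `T a b c d n = Σ_{i=0}^n [x^i] (a x + c)^i (b x + d)^{n-i}`, the trace of the `n`-th
symmetric power of the matrix `[[a,b],[c,d]]`. -/
def T (a b c d : ℂ) (n : ℕ) : ℂ :=
  ∑ i ∈ Finset.range (n + 1),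
    ((Polynomial.C a * Polynomial.X + Polynomial.C c) ^ i *
      (Polynomial.C b * Polynomial.X + Polynomial.C d) ^ (n - i)).coeff i

/-- auxiliary family -/
def W (a b c d : ℂ) (n : ℕ) : ℂ :=
  ∑ j ∈ Finset.range (n + 1),
    ((Polynomial.C a * Polynomial.X + Polynomial.C c) ^ (j + 1) *
      (Polynomial.C b * Polynomial.X + Polynomial.C d) ^ (n - j)).coeff j

lemma natDegree_lin_le (a c : ℂ) :
    ((Polynomial.C a * Polynomial.X + Polynomial.C c)).natDegree ≤ 1 := by
  apply (Polynomial.natDegree_add_le _ _).trans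
  simp only [Polynomial.natDegree_C, max_le_iff]
  exact ⟨(Polynomial.natDegree_C_mul_le a Polynomial.X).trans Polynomial.natDegree_X_le,
    Nat.zero_le _⟩

lemma coeff_lin_pow_self (a c : ℂ) (k : ℕ) :
    ((Polynomial.C a * Polynomial.X + Polynomial.C c) ^ k).coeff k = a ^ k := by
  induction k with
  | zero => simp
  | succ k ih =>
    rw [pow_succ, mul_add, Polynomial.coeff_add, pow_succ a]
    have h0 : ((Polynomial.C a * Polynomial.X + Polynomial.C c) ^ k *
        (Polynomial.C a * Polynomial.X)).coeff (k + 1) = a ^ k * a := by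
      have e : (Polynomial.C a * Polynomial.X + Polynomial.C c) ^ k *
          (Polynomial.C a * Polynomial.X)
          = ((Polynomial.C a * Polynomial.X + Polynomial.C c) ^ k * Polynomial.X) *
            Polynomial.C a := by ring
      rw [e, Polynomial.coeff_mul_C, Polynomial.coeff_mul_X, ih]
    have h1 : ((Polynomial.C a * Polynomial.X + Polynomial.C c) ^ k *
        Polynomial.C c).coeff (k + 1) = 0 := by
      rw [Polynomial.coeff_mul_C]
      have hd : ((Polynomial.C a * Polynomial.X + Polynomial.C c) ^ k).natDegree < k + 1 := by
        refine lt_of_le_of_lt (Polynomial.natDegree_pow_le.trans ?_) (Nat.lt_succ_of_le le_rfl)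
        have := natDegree_lin_le a c
        nlinarith
      rw [Polynomial.coeff_eq_zero_of_natDegree_lt hd, zero_mul]
    rw [h0, h1, add_zero]

lemma coeff_zero_mul_X (p : Polynomial ℂ) : (p * Polynomial.X).coeff 0 = 0 := by
  simp [Polynomial.coeff_mul_X_pow' p 1 0]

lemma T_rec (a b c d : ℂ) (n : ℕ) :
    T a b c d (n + 2) = a ^ (n + 2) + d * T a b c d (n + 1) + b * W a b c d n := by
  rw [T, Finset.sum_range_succ]
  have hlast : ((Polynomial.C a * Polynomial.X + Polynomial.C c) ^ (n + 2) *
      (Polynomial.C b * Polynomial.X + Polynomial.C d) ^ (n + 2 - (n + 2))).coeff (n + 2)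
      = a ^ (n + 2) := by
    simp [coeff_lin_pow_self]
  rw [hlast]
  have hsplit : ∀ i ∈ Finset.range (n + 2),
      ((Polynomial.C a * Polynomial.X + Polynomial.C c) ^ i *
        (Polynomial.C b * Polynomial.X + Polynomial.C d) ^ (n + 2 - i)).coeff i
      = d * ((Polynomial.C a * Polynomial.X + Polynomial.C c) ^ i *
          (Polynomial.C b * Polynomial.X + Polynomial.C d) ^ (n + 1 - i)).coeff i
        + b * (((Polynomial.C a * Polynomial.X + Polynomial.C c) ^ i *
          (Polynomial.C b * Polynomial.X + Polynomial.C d) ^ (n + 1 - i)) *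
            Polynomial.X).coeff i := by
    intro i hi
    have hi' : i ≤ n + 1 := Nat.lt_succ_iff.mp (Finset.mem_range.mp hi)
    have he : n + 2 - i = (n + 1 - i) + 1 := by omega
    rw [he, pow_succ, ← mul_assoc]
    have e2 : (Polynomial.C a * Polynomial.X + Polynomial.C c) ^ i *
        (Polynomial.C b * Polynomial.X + Polynomial.C d) ^ (n + 1 - i) *
        (Polynomial.C b * Polynomial.X + Polynomial.C d)
        = ((Polynomial.C a * Polynomial.X + Polynomial.C c) ^ i *
            (Polynomial.C b * Polynomial.X + Polynomial.C d) ^ (n + 1 - i) * Polynomial.X) *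
              Polynomial.C b
          + ((Polynomial.C a * Polynomial.X + Polynomial.C c) ^ i *
            (Polynomial.C b * Polynomial.X + Polynomial.C d) ^ (n + 1 - i)) *
              Polynomial.C d := by ring
    rw [e2, Polynomial.coeff_add, Polynomial.coeff_mul_C, Polynomial.coeff_mul_C]
    ring
  rw [Finset.sum_congr rfl hsplit, Finset.sum_add_distrib, ← Finset.mul_sum, ← Finset.mul_sum]
  have hb : (∑ i ∈ Finset.range (n + 2),
      (((Polynomial.C a * Polynomial.X + Polynomial.C c) ^ i *
        (Polynomial.C b * Polynomial.X + Polynomial.C d) ^ (n + 1 - i)) *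
          Polynomial.X).coeff i) = W a b c d n := by
    rw [Finset.sum_range_succ']
    simp only [coeff_zero_mul_X, add_zero, Polynomial.coeff_mul_X]
    rw [W]
    refine Finset.sum_congr rfl fun j hj => ?_
    have : n + 1 - (j + 1) = n - j := by omega
    rw [this]
  have hd : (∑ i ∈ Finset.range (n + 2),
      ((Polynomial.C a * Polynomial.X + Polynomial.C c) ^ i *
        (Polynomial.C b * Polynomial.X + Polynomial.C d) ^ (n + 1 - i)).coeff i)
      = T a b c d (n + 1) := rfl
  rw [hd, hb]
  ring

lemma W_rec (a b c d : ℂ) (n : ℕ) :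
    W a b c d (n + 1) = c * T a b c d (n + 1) + a * W a b c d n := by
  have hsplit : ∀ j ∈ Finset.range (n + 2),
      ((Polynomial.C a * Polynomial.X + Polynomial.C c) ^ (j + 1) *
        (Polynomial.C b * Polynomial.X + Polynomial.C d) ^ (n + 1 - j)).coeff j
      = c * ((Polynomial.C a * Polynomial.X + Polynomial.C c) ^ j *
          (Polynomial.C b * Polynomial.X + Polynomial.C d) ^ (n + 1 - j)).coeff j
        + a * (((Polynomial.C a * Polynomial.X + Polynomial.C c) ^ j *
          (Polynomial.C b * Polynomial.X + Polynomial.C d) ^ (n + 1 - j)) *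
            Polynomial.X).coeff j := by
    intro j hj
    have e2 : (Polynomial.C a * Polynomial.X + Polynomial.C c) ^ (j + 1) *
        (Polynomial.C b * Polynomial.X + Polynomial.C d) ^ (n + 1 - j)
        = ((Polynomial.C a * Polynomial.X + Polynomial.C c) ^ j *
            (Polynomial.C b * Polynomial.X + Polynomial.C d) ^ (n + 1 - j) * Polynomial.X) *
              Polynomial.C a
          + ((Polynomial.C a * Polynomial.X + Polynomial.C c) ^ j *
            (Polynomial.C b * Polynomial.X + Polynomial.C d) ^ (n + 1 - j)) *
              Polynomial.C c := by ring
    rw [e2, Polynomial.coeff_add, Polynomial.coeff_mul_C, Polynomial.coeff_mul_C]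
    ring
  rw [W, Finset.sum_congr rfl hsplit, Finset.sum_add_distrib, ← Finset.mul_sum, ← Finset.mul_sum]
  have ha : (∑ j ∈ Finset.range (n + 2),
      (((Polynomial.C a * Polynomial.X + Polynomial.C c) ^ j *
        (Polynomial.C b * Polynomial.X + Polynomial.C d) ^ (n + 1 - j)) *
          Polynomial.X).coeff j) = W a b c d n := by
    rw [Finset.sum_range_succ']
    simp only [coeff_zero_mul_X, add_zero, Polynomial.coeff_mul_X]
    rw [W]
    refine Finset.sum_congr rfl fun j hj => ?_
    have : n + 1 - (j + 1) = n - j := by omega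
    rw [this]
  rw [ha, T]

lemma T_zero (a b c d : ℂ) : T a b c d 0 = 1 := by simp [T]

lemma T_one (a b c d : ℂ) : T a b c d 1 = a + d := by
  rw [T]
  rw [Finset.sum_range_succ, Finset.sum_range_one]
  simp [coeff_lin_pow_self]
  ring

lemma T_recurrence (a b c d : ℂ) (n : ℕ) :
    T a b c d (n + 2) = (a + d) * T a b c d (n + 1) - (a * d - b * c) * T a b c d n := by
  induction n with
  | zero =>
    rw [T_rec, T_one, T_zero]
    have hW0 : W a b c d 0 = c := by simp [W]
    rw [hW0]; ring
  | succ m ih =>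
    rw [T_rec a b c d (m + 1), W_rec]
    have hbW : b * W a b c d m = T a b c d (m + 2) - a ^ (m + 2) - d * T a b c d (m + 1) := by
      rw [T_rec]; ring
    calc a ^ (m + 3) + d * T a b c d (m + 2) + b * (c * T a b c d (m + 1) + a * W a b c d m)
        = a ^ (m + 3) + d * T a b c d (m + 2) + b * c * T a b c d (m + 1)
          + a * (b * W a b c d m) := by ring
      _ = (a + d) * T a b c d (m + 2) - (a * d - b * c) * T a b c d (m + 1) := by
          rw [hbW]; ring

/-- Fin 2 finsupp decomposition -/
lemma fin2_finsupp_eq (v : Fin 2 →₀ ℕ) :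
    v = Finsupp.single 0 (v 0) + Finsupp.single 1 (v 1) := by
  ext x
  fin_cases x <;> simp [Finsupp.single_apply]

/-- bridge: coefficient of a homogeneous polynomial vs its one-variable specialization -/
lemma coeff_homog_eq (p : MvPolynomial (Fin 2) ℂ) (n : ℕ) (hp : p.IsHomogeneous n)
    (i : ℕ) :
    MvPolynomial.coeff (Finsupp.single 0 i + Finsupp.single 1 (n - i)) p
      = (MvPolynomial.aeval ![Polynomial.X, 1] p : Polynomial ℂ).coeff i := by
  conv_lhs => rw [p.as_sum]
  conv_rhs => rw [p.as_sum]
  rw [map_sum, MvPolynomial.coeff_sum, Polynomial.finset_sum_coeff]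
  refine Finset.sum_congr rfl fun v hv => ?_
  have hdeg : v 0 + v 1 = n := by
    have := hp (MvPolynomial.mem_support_iff.mp hv)
    simp only [Finsupp.weight_apply, Pi.one_apply, smul_eq_mul, mul_one] at this
    rw [Finsupp.sum_fintype _ _ (fun _ => rfl), Fin.sum_univ_two] at this
    exact this
  have haev : (MvPolynomial.aeval ![Polynomial.X, 1] (MvPolynomial.monomial v
        (MvPolynomial.coeff v p)) : Polynomial ℂ)
      = Polynomial.C (MvPolynomial.coeff v p) * Polynomial.X ^ (v 0) := by
    rw [MvPolynomial.aeval_monomial]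
    rw [Finsupp.prod_fintype _ _ (fun _ => pow_zero _), Fin.prod_univ_two]
    simp [Polynomial.algebraMap_eq]
  rw [haev, MvPolynomial.coeff_monomial]
  by_cases h : v 0 = i
  · have h1 : v 1 = n - i := by omega
    rw [if_pos (by rw [fin2_finsupp_eq v, h, h1])]
    rw [h, Polynomial.coeff_C_mul, Polynomial.coeff_X_pow, if_pos rfl, mul_one]
  · rw [if_neg (by
      intro he
      apply h
      rw [he]
      simp [Finsupp.single_apply])]
    rw [Polynomial.coeff_C_mul, Polynomial.coeff_X_pow, if_neg (fun he => h he.symm), mul_zero]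

lemma lin_homog (u v : ℂ) :
    (MvPolynomial.C u * MvPolynomial.X 0 + MvPolynomial.C v * MvPolynomial.X 1
      : MvPolynomial (Fin 2) ℂ).IsHomogeneous 1 := by
  apply MvPolynomial.IsHomogeneous.add <;>
    simpa using (MvPolynomial.isHomogeneous_C _ _).mul (MvPolynomial.isHomogeneous_X _ _)

lemma symPoly2_homog (n : ℕ) (g : Matrix (Fin 2) (Fin 2) ℂ) (k : Fin (n + 1)) :
    (symPoly2 n g k).IsHomogeneous n := by
  have h := ((lin_homog (g 0 0) (g 1 0)).pow (k : ℕ)).mul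
    ((lin_homog (g 0 1) (g 1 1)).pow (n - (k : ℕ)))
  have hk : (k : ℕ) ≤ n := Fin.is_le k
  have he : 1 * (k : ℕ) + 1 * (n - (k : ℕ)) = n := by omega
  rw [he] at h
  exact h

lemma aeval_symPoly2 (n : ℕ) (g : Matrix (Fin 2) (Fin 2) ℂ) (k : Fin (n + 1)) :
    (MvPolynomial.aeval ![Polynomial.X, 1] (symPoly2 n g k) : Polynomial ℂ)
      = (Polynomial.C (g 0 0) * Polynomial.X + Polynomial.C (g 1 0)) ^ (k : ℕ) *
        (Polynomial.C (g 0 1) * Polynomial.X + Polynomial.C (g 1 1)) ^ (n - (k : ℕ)) := by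
  simp [symPoly2, Polynomial.algebraMap_eq]

lemma trace_symMatrix2 (n : ℕ) (g : Matrix (Fin 2) (Fin 2) ℂ) :
    (symMatrix2 n g).trace = T (g 0 0) (g 0 1) (g 1 0) (g 1 1) n := by
  rw [Matrix.trace, T, ← Fin.sum_univ_eq_sum_range]
  refine Finset.sum_congr rfl fun i _ => ?_
  show MvPolynomial.coeff _ (symPoly2 n g i) = _
  rw [coeff_homog_eq _ n (symPoly2_homog n g i), aeval_symPoly2]

lemma series_identity (a b c d : ℂ) :
    (1 - PowerSeries.C (a + d) * PowerSeries.X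
        + PowerSeries.C (a * d - b * c) * PowerSeries.X ^ 2)
      * PowerSeries.mk (T a b c d) = 1 := by
  have expand : (1 - PowerSeries.C (a + d) * PowerSeries.X
        + PowerSeries.C (a * d - b * c) * PowerSeries.X ^ 2) * PowerSeries.mk (T a b c d)
      = PowerSeries.mk (T a b c d)
        - PowerSeries.C (a + d) * (PowerSeries.X ^ 1 * PowerSeries.mk (T a b c d))
        + PowerSeries.C (a * d - b * c) * (PowerSeries.X ^ 2 * PowerSeries.mk (T a b c d)) := by
    ring
  rw [expand]
  ext n
  rw [map_add, map_sub, PowerSeries.coeff_C_mul, PowerSeries.coeff_C_mul,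
    PowerSeries.coeff_X_pow_mul', PowerSeries.coeff_X_pow_mul',
    PowerSeries.coeff_mk, PowerSeries.coeff_one]
  match n with
  | 0 => simp [T_zero]
  | 1 => simp [PowerSeries.coeff_mk, T_one, T_zero]
  | (m + 2) =>
    have h2 : (2:ℕ) ≤ m + 2 := by omega
    have h1 : (1:ℕ) ≤ m + 2 := by omega
    rw [if_pos h2, if_pos h1, if_neg (by omega : ¬ (m + 2 = 0))]
    simp only [PowerSeries.coeff_mk]
    have hm : m + 2 - 1 = m + 1 := by omega
    rw [hm, show m + 2 - 2 = m from rfl, T_recurrence]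
    ring

end SymAux
end

/-- Rationality of the multiplicity series, for an arbitrary class function `χ`. -/
theorem symMult2_series_rational
    (Γ : Subgroup (SpecialLinearGroup (Fin 2) ℂ)) [Fintype Γ] (χ : Γ → ℂ) :
    ∃ N D : Polynomial ℂ, D.coeff 0 ≠ 0 ∧
      Polynomial.aeval (PowerSeries.X : PowerSeries ℂ) D *
          PowerSeries.mk (fun n => symMult2 Γ χ n) =
        Polynomial.aeval (PowerSeries.X : PowerSeries ℂ) N := by
  classical
  set e1 : Γ → ℂ := fun g => g.1.1 0 0 + g.1.1 1 1 with he1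
  set e2 : Γ → ℂ := fun g => g.1.1 0 0 * g.1.1 1 1 - g.1.1 0 1 * g.1.1 1 0 with he2
  set Dp : Γ → Polynomial ℂ := fun g =>
    1 - Polynomial.C (e1 g) * Polynomial.X + Polynomial.C (e2 g) * Polynomial.X ^ 2 with hDp
  -- the images of the Dp's in power series
  have haD : ∀ g : Γ, Polynomial.aeval (PowerSeries.X : PowerSeries ℂ) (Dp g)
      = 1 - PowerSeries.C (e1 g) * PowerSeries.X
        + PowerSeries.C (e2 g) * PowerSeries.X ^ 2 := by
    intro g
    simp [hDp, map_sub, map_add, _root_.map_mul, map_pow, Polynomial.aeval_X, Polynomial.aeval_C,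
      PowerSeries.algebraMap_apply]
  -- the per-element inverse identity
  have hunit : ∀ g : Γ, Polynomial.aeval (PowerSeries.X : PowerSeries ℂ) (Dp g) *
      PowerSeries.mk (fun n => (symMatrix2 n g.1.1).trace) = 1 := by
    intro g
    have htr : (fun n => (symMatrix2 n g.1.1).trace)
        = SymAux.T (g.1.1 0 0) (g.1.1 0 1) (g.1.1 1 0) (g.1.1 1 1) := by
      funext n
      exact SymAux.trace_symMatrix2 n g.1.1
    rw [haD, htr, he1, he2]
    exact SymAux.series_identity _ _ _ _
  refine ⟨Polynomial.C ((Fintype.card Γ : ℂ)⁻¹) *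
      ∑ g : Γ, Polynomial.C ((starRingEnd ℂ) (χ g)) * ∏ h ∈ Finset.univ.erase g, Dp h,
    ∏ g : Γ, Dp g, ?_, ?_⟩
  · rw [Polynomial.coeff_zero_eq_eval_zero, Polynomial.eval_prod]
    have : ∀ g : Γ, (Dp g).eval 0 = 1 := by
      intro g; simp [hDp]
    rw [Finset.prod_congr rfl (fun g _ => this g)]
    simp
  · have hmk : PowerSeries.mk (fun n => symMult2 Γ χ n)
        = PowerSeries.C ((Fintype.card Γ : ℂ)⁻¹) *
          ∑ g : Γ, PowerSeries.C ((starRingEnd ℂ) (χ g)) *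
            PowerSeries.mk (fun n => (symMatrix2 n g.1.1).trace) := by
      ext k
      rw [PowerSeries.coeff_mk, symMult2, PowerSeries.coeff_C_mul, map_sum]
      congr 1
      refine Finset.sum_congr rfl fun g _ => ?_
      rw [PowerSeries.coeff_C_mul, PowerSeries.coeff_mk, mul_comm]
    rw [hmk, map_prod]
    have hterm : ∀ g : Γ,
        (∏ h : Γ, Polynomial.aeval (PowerSeries.X : PowerSeries ℂ) (Dp h)) *
          (PowerSeries.C ((starRingEnd ℂ) (χ g)) *
            PowerSeries.mk (fun n => (symMatrix2 n g.1.1).trace))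
        = PowerSeries.C ((starRingEnd ℂ) (χ g)) *
            ∏ h ∈ Finset.univ.erase g, Polynomial.aeval (PowerSeries.X : PowerSeries ℂ) (Dp h) := by
      intro g
      rw [← Finset.mul_prod_erase Finset.univ _ (Finset.mem_univ g)]
      calc Polynomial.aeval (PowerSeries.X : PowerSeries ℂ) (Dp g) *
            (∏ h ∈ Finset.univ.erase g, Polynomial.aeval (PowerSeries.X : PowerSeries ℂ) (Dp h)) *
            (PowerSeries.C ((starRingEnd ℂ) (χ g)) *
              PowerSeries.mk (fun n => (symMatrix2 n g.1.1).trace))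
          = PowerSeries.C ((starRingEnd ℂ) (χ g)) *
            (∏ h ∈ Finset.univ.erase g, Polynomial.aeval (PowerSeries.X : PowerSeries ℂ) (Dp h)) *
            (Polynomial.aeval (PowerSeries.X : PowerSeries ℂ) (Dp g) *
              PowerSeries.mk (fun n => (symMatrix2 n g.1.1).trace)) := by ring
        _ = _ := by rw [hunit g, mul_one]
    calc (∏ h : Γ, Polynomial.aeval (PowerSeries.X : PowerSeries ℂ) (Dp h)) *
          (PowerSeries.C ((Fintype.card Γ : ℂ)⁻¹) *
            ∑ g : Γ, PowerSeries.C ((starRingEnd ℂ) (χ g)) *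
              PowerSeries.mk (fun n => (symMatrix2 n g.1.1).trace))
        = PowerSeries.C ((Fintype.card Γ : ℂ)⁻¹) *
          ∑ g : Γ, (∏ h : Γ, Polynomial.aeval (PowerSeries.X : PowerSeries ℂ) (Dp h)) *
            (PowerSeries.C ((starRingEnd ℂ) (χ g)) *
              PowerSeries.mk (fun n => (symMatrix2 n g.1.1).trace)) := by
          rw [mul_left_comm, Finset.mul_sum]
      _ = PowerSeries.C ((Fintype.card Γ : ℂ)⁻¹) *
          ∑ g : Γ, PowerSeries.C ((starRingEnd ℂ) (χ g)) *
            ∏ h ∈ Finset.univ.erase g, Polynomial.aeval (PowerSeries.X : PowerSeries ℂ) (Dp h) := by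
          rw [Finset.sum_congr rfl (fun g _ => hterm g)]
      _ = Polynomial.aeval (PowerSeries.X : PowerSeries ℂ)
          (Polynomial.C ((Fintype.card Γ : ℂ)⁻¹) *
            ∑ g : Γ, Polynomial.C ((starRingEnd ℂ) (χ g)) * ∏ h ∈ Finset.univ.erase g, Dp h) := by
          simp only [_root_.map_mul, map_sum, map_prod, Polynomial.aeval_C,
            PowerSeries.algebraMap_apply, Algebra.algebraMap_self, RingHom.id_apply]
      _ = _ := rfl

/-- For a finite subgroup `Γ` of `SL₂(ℂ)` and an irreducible complex character `χᵢ` of `Γ`,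
the formal power series `Σₙ mᵢ(n)·tⁿ`, where `mᵢ(n)` is the multiplicity of `χᵢ` in the `n`-th
symmetric power of the natural representation, is a rational function: there are polynomials
`N, D ∈ ℂ[t]` with `D(0) ≠ 0` and `D(t)·Σₙ mᵢ(n)·tⁿ = N(t)` in `ℂ⟦t⟧`. -/
theorem sl2_multiplicity_series_rational
    (Γ : Subgroup (SpecialLinearGroup (Fin 2) ℂ)) [Fintype Γ]
    (V : FDRep ℂ Γ) (hV : Simple V) :
    ∃ N D : Polynomial ℂ, D.coeff 0 ≠ 0 ∧
      Polynomial.aeval (PowerSeries.X : PowerSeries ℂ) D *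
          PowerSeries.mk (fun n => symMult2 Γ V.character n) =
        Polynomial.aeval (PowerSeries.X : PowerSeries ℂ) N := by
  exact symMult2_series_rational Γ V.character
end

section
/- Let Γ be a finite subgroup of SL₂(ℂ), ρ : Γ → GL(ℂ²) the natural (inclusion) representation, and χᵢ an irreducible complex character of Γ. Then in ℂ⟦t⟧ one has Σₙ mᵢ(n)·tⁿ = (1/|Γ|)·Σ_{g∈Γ} conj(χᵢ(g))·(1 − tr(g)·t + t²)⁻¹, where mᵢ(n) is the multiplicity of χᵢ in Symⁿ(ρ) and (1 − tr(g)t + t²)⁻¹ denotes the multiplicative inverse of the polynomial 1 − tr(g)t + t² in ℂ⟦t⟧ (which exists since its constant term is 1). -/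
open Matrix Complex PowerSeries CategoryTheory

namespace SL2Aux


noncomputable def mexp (i j : ℕ) : Fin 2 →₀ ℕ :=
  Finsupp.single 0 i + Finsupp.single 1 j

lemma mexp_apply0 (i j : ℕ) : mexp i j 0 = i := by
  simp [mexp, Finsupp.single_apply]

lemma mexp_apply1 (i j : ℕ) : mexp i j 1 = j := by
  simp [mexp, Finsupp.single_apply]

lemma degree_mexp (i j : ℕ) : (mexp i j).degree = i + j := by
  rw [Finsupp.degree_apply, Finset.sum_subset (Finset.subset_univ _)
    (by intro x _ hx; simpa using Finsupp.notMem_support_iff.mp hx)]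
  rw [Fin.sum_univ_two, mexp_apply0, mexp_apply1]

lemma mexp_sub0 (i j : ℕ) : mexp (i+1) j - Finsupp.single 0 1 = mexp i j := by
  ext x
  fin_cases x <;>
    simp [mexp, Finsupp.single_apply, Finsupp.sub_apply]

lemma mexp_sub1 (i j : ℕ) : mexp i (j+1) - Finsupp.single 1 1 = mexp i j := by
  ext x
  fin_cases x <;>
    simp [mexp, Finsupp.single_apply, Finsupp.sub_apply]

lemma single0_le_mexp (i j : ℕ) : Finsupp.single (0 : Fin 2) 1 ≤ mexp i j ↔ 1 ≤ i := by
  rw [Finsupp.single_le_iff, mexp_apply0]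

lemma single1_le_mexp (i j : ℕ) : Finsupp.single (1 : Fin 2) 1 ≤ mexp i j ↔ 1 ≤ j := by
  rw [Finsupp.single_le_iff, mexp_apply1]

/-- coefficient of a linear form times p -/
lemma coeff_lin_mul (a c : ℂ) (p : MvPolynomial (Fin 2) ℂ) (i j : ℕ) :
    MvPolynomial.coeff (mexp i j) ((MvPolynomial.C a * MvPolynomial.X 0 + MvPolynomial.C c * MvPolynomial.X 1) * p)
      = (if 1 ≤ i then a * MvPolynomial.coeff (mexp (i-1) j) p else 0)
        + (if 1 ≤ j then c * MvPolynomial.coeff (mexp i (j-1)) p else 0) := by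
  rw [add_mul, MvPolynomial.coeff_add]
  rw [show (MvPolynomial.C a * MvPolynomial.X 0 : MvPolynomial (Fin 2) ℂ) = MvPolynomial.monomial (Finsupp.single 0 1) a by
    rw [← MvPolynomial.C_mul_X_pow_eq_monomial, pow_one]]
  rw [show (MvPolynomial.C c * MvPolynomial.X 1 : MvPolynomial (Fin 2) ℂ) = MvPolynomial.monomial (Finsupp.single 1 1) c by
    rw [← MvPolynomial.C_mul_X_pow_eq_monomial, pow_one]]
  rw [MvPolynomial.coeff_monomial_mul', MvPolynomial.coeff_monomial_mul']
  congr 1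
  · simp only [single0_le_mexp]
    split_ifs with h
    · obtain ⟨i', rfl⟩ := Nat.exists_eq_add_of_le h
      rw [add_comm 1 i', mexp_sub0]
      simp
    · rfl
  · simp only [single1_le_mexp]
    split_ifs with h
    · obtain ⟨j', rfl⟩ := Nat.exists_eq_add_of_le h
      rw [add_comm 1 j', mexp_sub1]
      simp
    · rfl

noncomputable def Pnk (a b c d : ℂ) (n k : ℕ) : MvPolynomial (Fin 2) ℂ :=
  (MvPolynomial.C a * MvPolynomial.X 0 + MvPolynomial.C c * MvPolynomial.X 1) ^ k * (MvPolynomial.C b * MvPolynomial.X 0 + MvPolynomial.C d * MvPolynomial.X 1) ^ (n - k)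

noncomputable def coef (a b c d : ℂ) (n i k : ℕ) : ℂ :=
  MvPolynomial.coeff (mexp i (n - i)) (Pnk a b c d n k)

lemma lin_hom (a c : ℂ) :
    (MvPolynomial.C a * MvPolynomial.X 0 + MvPolynomial.C c * MvPolynomial.X 1 : MvPolynomial (Fin 2) ℂ).IsHomogeneous 1 := by
  apply MvPolynomial.IsHomogeneous.add
  · simpa using (MvPolynomial.isHomogeneous_C (Fin 2) a).mul (MvPolynomial.isHomogeneous_X ℂ 0)
  · simpa using (MvPolynomial.isHomogeneous_C (Fin 2) c).mul (MvPolynomial.isHomogeneous_X ℂ 1)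

lemma Pnk_hom (a b c d : ℂ) {n k : ℕ} (h : k ≤ n) : (Pnk a b c d n k).IsHomogeneous n := by
  have := ((lin_hom a c).pow k).mul ((lin_hom b d).pow (n - k))
  simpa [Pnk, Nat.add_sub_cancel' h] using this

lemma coef_eq_zero (a b c d : ℂ) {n i k : ℕ} (h : k ≤ n) (hi : n < i) :
    coef a b c d n i k = 0 := by
  apply (Pnk_hom a b c d h).coeff_eq_zero
  rw [degree_mexp]
  omega

lemma PnkA (a b c d : ℂ) (n k : ℕ) :
    Pnk a b c d (n+1) (k+1) = (MvPolynomial.C a * MvPolynomial.X 0 + MvPolynomial.C c * MvPolynomial.X 1) * Pnk a b c d n k := by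
  rw [Pnk, Pnk, Nat.succ_sub_succ, pow_succ']
  ring

lemma PnkB (a b c d : ℂ) {n k : ℕ} (h : k ≤ n) :
    Pnk a b c d (n+1) k = (MvPolynomial.C b * MvPolynomial.X 0 + MvPolynomial.C d * MvPolynomial.X 1) * Pnk a b c d n k := by
  rw [Pnk, Pnk, show n + 1 - k = (n - k) + 1 by omega, pow_succ]
  ring

lemma recA (a b c d : ℂ) {n k : ℕ} (h : k ≤ n) (i : ℕ) :
    coef a b c d (n+1) (i+1) (k+1)
      = a * coef a b c d n i k + c * coef a b c d n (i+1) k := by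
  rw [coef, PnkA, show n + 1 - (i+1) = n - i by omega, coeff_lin_mul,
    if_pos (Nat.le_add_left 1 i), Nat.add_sub_cancel]
  by_cases hin : i < n
  · rw [if_pos (by omega)]
    rw [coef, coef, show n - i - 1 = n - (i+1) by omega]
  · rw [if_neg (by omega), coef, coef_eq_zero a b c d h (by omega)]
    ring

lemma recB (a b c d : ℂ) {n k : ℕ} (h : k ≤ n) (i : ℕ) :
    coef a b c d (n+1) (i+1) k
      = b * coef a b c d n i k + d * coef a b c d n (i+1) k := by
  rw [coef, PnkB a b c d h, show n + 1 - (i+1) = n - i by omega, coeff_lin_mul,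
    if_pos (Nat.le_add_left 1 i), Nat.add_sub_cancel]
  by_cases hin : i < n
  · rw [if_pos (by omega)]
    rw [coef, coef, show n - i - 1 = n - (i+1) by omega]
  · rw [if_neg (by omega), coef, coef_eq_zero a b c d h (by omega)]
    ring

lemma recB0 (a b c d : ℂ) {n k : ℕ} (h : k ≤ n) :
    coef a b c d (n+1) 0 k = d * coef a b c d n 0 k := by
  rw [coef, PnkB a b c d h, show n + 1 - 0 = n + 1 from rfl, coeff_lin_mul,
    if_neg (by omega), if_pos (by omega), Nat.add_sub_cancel]
  rw [coef, zero_add, Nat.sub_zero]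

noncomputable def sfun (a b c d : ℂ) (n : ℕ) : ℂ :=
  ∑ i ∈ Finset.range (n+1), coef a b c d n i i

lemma mexp_zero : mexp 0 0 = 0 := by
  ext x; fin_cases x <;> simp [mexp, Finsupp.single_apply]

lemma sfun_zero (a b c d : ℂ) : sfun a b c d 0 = 1 := by
  rw [sfun, Finset.sum_range_one, coef]
  norm_num [Pnk, mexp_zero]

lemma sfun_one (a b c d : ℂ) : sfun a b c d 1 = a + d := by
  rw [sfun, Finset.sum_range_succ, Finset.sum_range_one]
  rw [coef, coef, Pnk, Pnk]
  simp only [pow_zero, pow_one, Nat.sub_zero, Nat.sub_self, one_mul, mul_one]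
  rw [show mexp 0 (1 - 0) = Finsupp.single 1 1 by
      ext x; fin_cases x <;> simp [mexp, Finsupp.single_apply],
    show mexp 1 (1 - 1) = Finsupp.single 0 1 by
      ext x; fin_cases x <;> simp [mexp, Finsupp.single_apply]]
  simp [MvPolynomial.coeff_single_X]
  ring

lemma sfun_rec (a b c d : ℂ) (n : ℕ) :
    sfun a b c d (n+2) = (a + d) * sfun a b c d (n+1) - (a*d - b*c) * sfun a b c d n := by
  have A2 : ∑ i ∈ Finset.range (n+2+1), coef a b c d (n+2) i i
      = coef a b c d (n+2) 0 0 + ∑ i ∈ Finset.range (n+2), coef a b c d (n+2) (i+1) (i+1) := by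
    rw [Finset.sum_range_succ' (fun i => coef a b c d (n+2) i i) (n+2)]
    ring
  have A2' : ∑ i ∈ Finset.range (n+2), coef a b c d (n+2) (i+1) (i+1)
      = a * ∑ i ∈ Finset.range (n+2), coef a b c d (n+1) i i
        + c * ∑ i ∈ Finset.range (n+2), coef a b c d (n+1) (i+1) i := by
    rw [Finset.mul_sum, Finset.mul_sum, ← Finset.sum_add_distrib]
    exact Finset.sum_congr rfl fun i hi =>
      recA a b c d (Nat.lt_succ_iff.mp (Finset.mem_range.mp hi)) i
  have C2 : ∑ i ∈ Finset.range (n+2), coef a b c d (n+1) (i+1) i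
      = b * ∑ i ∈ Finset.range (n+1), coef a b c d n i i
        + d * ∑ i ∈ Finset.range (n+1), coef a b c d n (i+1) i := by
    rw [Finset.sum_range_succ, coef_eq_zero a b c d (le_refl (n+1)) (by omega), add_zero]
    rw [Finset.mul_sum, Finset.mul_sum, ← Finset.sum_add_distrib]
    exact Finset.sum_congr rfl fun i hi =>
      recB a b c d (Nat.lt_succ_iff.mp (Finset.mem_range.mp hi)) i
  have A1 : ∑ i ∈ Finset.range (n+1+1), coef a b c d (n+1) i i
      = coef a b c d (n+1) 0 0 + ∑ i ∈ Finset.range (n+1), coef a b c d (n+1) (i+1) (i+1) := by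
    rw [Finset.sum_range_succ' (fun i => coef a b c d (n+1) i i) (n+1)]
    ring
  have A1' : ∑ i ∈ Finset.range (n+1), coef a b c d (n+1) (i+1) (i+1)
      = a * ∑ i ∈ Finset.range (n+1), coef a b c d n i i
        + c * ∑ i ∈ Finset.range (n+1), coef a b c d n (i+1) i := by
    rw [Finset.mul_sum, Finset.mul_sum, ← Finset.sum_add_distrib]
    exact Finset.sum_congr rfl fun i hi =>
      recA a b c d (Nat.lt_succ_iff.mp (Finset.mem_range.mp hi)) i
  have B0 : coef a b c d (n+2) 0 0 = d * coef a b c d (n+1) 0 0 :=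
    recB0 a b c d (Nat.zero_le (n+1))
  have h12 : ∑ i ∈ Finset.range (n+2), coef a b c d (n+1) i i
      = ∑ i ∈ Finset.range (n+1+1), coef a b c d (n+1) i i := rfl
  simp only [sfun]
  rw [h12] at A2'
  linear_combination A2 + A2' + c * C2 + B0 - d * A1 - d * A1'



lemma mk_eq_inv (s : ℕ → ℂ) (τ : ℂ) (h0 : s 0 = 1) (h1 : s 1 = τ)
    (hrec : ∀ n, s (n+2) = τ * s (n+1) - s n) :
    PowerSeries.mk s =
      (1 - PowerSeries.C τ * PowerSeries.X + PowerSeries.X ^ 2)⁻¹ := by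
  have hc : PowerSeries.constantCoeff
      (1 - PowerSeries.C τ * PowerSeries.X + PowerSeries.X ^ 2) ≠ 0 := by
    simp
  rw [PowerSeries.eq_inv_iff_mul_eq_one hc]
  have hexp : PowerSeries.mk s * (1 - PowerSeries.C τ * PowerSeries.X + PowerSeries.X ^ 2)
      = PowerSeries.mk s - PowerSeries.C τ * (PowerSeries.mk s * PowerSeries.X ^ 1)
        + PowerSeries.mk s * PowerSeries.X ^ 2 := by
    ring
  rw [hexp]
  ext n
  rw [map_add, map_sub, PowerSeries.coeff_C_mul, PowerSeries.coeff_mul_X_pow',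
    PowerSeries.coeff_mul_X_pow', PowerSeries.coeff_mk, PowerSeries.coeff_one]
  rcases n with _ | n
  · norm_num [h0]
  · rcases n with _ | n
    · norm_num [h0, h1]
    · have := hrec n
      simp only [Nat.succ_ne_zero, if_false, if_pos (by omega : 1 ≤ n + 1 + 1),
        if_pos (by omega : 2 ≤ n + 1 + 1)]
      rw [PowerSeries.coeff_mk, PowerSeries.coeff_mk,
        show n + 1 + 1 - 1 = n + 1 by omega, show n + 1 + 1 - 2 = n by omega]
      rw [show n + 1 + 1 = n + 2 from rfl, this]
      ring


end SL2Aux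

lemma trace_symMatrix2 (n : ℕ) (g : Matrix (Fin 2) (Fin 2) ℂ) :
    (symMatrix2 n g).trace = SL2Aux.sfun (g 0 0) (g 0 1) (g 1 0) (g 1 1) n := by
  rw [Matrix.trace, SL2Aux.sfun, ← Fin.sum_univ_eq_sum_range]
  exact Finset.sum_congr rfl fun i _ => rfl

/-- For a finite subgroup `Γ` of `SL₂(ℂ)` and an irreducible complex character `χᵢ` of `Γ`,
`Σₙ mᵢ(n)·tⁿ = (1/|Γ|)·Σ_{g∈Γ} conj(χᵢ(g))·(1 − tr(g)·t + t²)⁻¹` in `ℂ⟦t⟧`. -/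
theorem sl2_multiplicity_series_formula
    (Γ : Subgroup (SpecialLinearGroup (Fin 2) ℂ)) [Fintype Γ]
    (V : FDRep ℂ Γ) (hV : Simple V) :
    PowerSeries.mk (fun n => symMult2 Γ V.character n) =
      (Fintype.card Γ : ℂ)⁻¹ •
        ∑ g : Γ, PowerSeries.C ((starRingEnd ℂ) (V.character g)) *
          (1 - PowerSeries.C (Matrix.trace g.1.1) * PowerSeries.X + PowerSeries.X ^ 2)⁻¹ := by
  have key : ∀ g : Γ,
      (1 - PowerSeries.C (Matrix.trace g.1.1) * PowerSeries.X + PowerSeries.X ^ 2)⁻¹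
        = PowerSeries.mk (SL2Aux.sfun (g.1.1 0 0) (g.1.1 0 1) (g.1.1 1 0) (g.1.1 1 1)) := by
    intro g
    have hdet : g.1.1 0 0 * g.1.1 1 1 - g.1.1 0 1 * g.1.1 1 0 = 1 := by
      have h := g.1.prop
      rwa [Matrix.det_fin_two] at h
    refine (SL2Aux.mk_eq_inv _ _ (SL2Aux.sfun_zero _ _ _ _) ?_ ?_).symm
    · rw [SL2Aux.sfun_one, Matrix.trace_fin_two]
    · intro n
      rw [SL2Aux.sfun_rec, hdet, Matrix.trace_fin_two, one_mul]
  apply PowerSeries.ext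
  intro n
  rw [PowerSeries.coeff_mk, PowerSeries.coeff_smul, map_sum, smul_eq_mul, symMult2]
  congr 1
  refine Finset.sum_congr rfl fun g _ => ?_
  rw [key g, PowerSeries.coeff_C_mul, PowerSeries.coeff_mk, trace_symMatrix2, mul_comm]
end

section
/- Let j ≥ 1, ζ = exp(2πi/j), and let Γ ⊂ SL₂(ℂ) be the cyclic group {diag(ζᵏ, ζ⁻ᵏ) : k = 0, …, j−1}, identified with ℤ/jℤ. For i ∈ {0, …, j−1} let mᵢ(n) be the multiplicity of the character k ↦ ζ^{ik} of ℤ/jℤ in the n-th symmetric power Symⁿ of the natural inclusion representation of Γ on ℂ². Then in ℂ⟦t⟧ one has Σₙ mᵢ(n)·tⁿ = (1/j)·Σ_{p=0}^{j−1} ζ^{ip}·((1 − tζᵖ)(1 − tζ⁻ᵖ))⁻¹, where the inverse is taken in ℂ⟦t⟧. -/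
open Matrix Complex PowerSeries CategoryTheory

lemma symMatrix2_diagonal_trace (a b : ℂ) (n : ℕ) :
    (symMatrix2 n (Matrix.diagonal ![a, b])).trace
      = ∑ m ∈ Finset.range (n + 1), a ^ m * b ^ (n - m) := by
  rw [Matrix.trace]
  rw [Finset.sum_range fun m => a ^ m * b ^ (n - m)]
  apply Finset.sum_congr rfl
  intro m _
  have h00 : Matrix.diagonal ![a, b] 0 0 = a := by simp
  have h11 : Matrix.diagonal ![a, b] 1 1 = b := by simp
  have h10 : Matrix.diagonal ![a, b] 1 0 = 0 := by
    rw [Matrix.diagonal_apply_ne]; decide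
  have h01 : Matrix.diagonal ![a, b] 0 1 = 0 := by
    rw [Matrix.diagonal_apply_ne]; decide
  simp only [Matrix.diag, symMatrix2, symPoly2, Matrix.of_apply, h00, h11, h10, h01,
    map_zero, zero_mul, add_zero, zero_add]
  rw [mul_pow, mul_pow, ← MvPolynomial.C_pow, ← MvPolynomial.C_pow,
    MvPolynomial.X_pow_eq_monomial, MvPolynomial.X_pow_eq_monomial,
    mul_mul_mul_comm, ← _root_.map_mul, MvPolynomial.monomial_mul, one_mul,
    MvPolynomial.coeff_C_mul, MvPolynomial.coeff_monomial, if_pos rfl, mul_one]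

lemma one_sub_C_mul_X_mul_geom (a : ℂ) :
    (1 - PowerSeries.C a * PowerSeries.X) * PowerSeries.mk (fun n => a ^ n) = 1 := by
  ext n
  rw [sub_mul, one_mul, mul_assoc, map_sub, PowerSeries.coeff_C_mul]
  cases n with
  | zero => simp
  | succ n =>
      rw [PowerSeries.coeff_succ_X_mul, PowerSeries.coeff_mk, PowerSeries.coeff_mk]
      simp [pow_succ, mul_comm]

lemma inv_one_sub_mul_one_sub (a b : ℂ) :
    ((1 - PowerSeries.C a * PowerSeries.X) * (1 - PowerSeries.C b * PowerSeries.X))⁻¹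
      = PowerSeries.mk (fun n => ∑ m ∈ Finset.range (n + 1), a ^ m * b ^ (n - m)) := by
  rw [PowerSeries.inv_eq_iff_mul_eq_one (by simp)]
  have hmk : PowerSeries.mk (fun n => ∑ m ∈ Finset.range (n + 1), a ^ m * b ^ (n - m))
      = PowerSeries.mk (fun n => a ^ n) * PowerSeries.mk (fun n => b ^ n) := by
    ext n
    rw [PowerSeries.coeff_mk, PowerSeries.coeff_mul,
      Finset.Nat.sum_antidiagonal_eq_sum_range_succ_mk]
    simp
  rw [hmk, show PowerSeries.mk (fun n => a ^ n) * PowerSeries.mk (fun n => b ^ n) *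
      ((1 - PowerSeries.C a * PowerSeries.X) * (1 - PowerSeries.C b * PowerSeries.X))
      = ((1 - PowerSeries.C a * PowerSeries.X) * PowerSeries.mk (fun n => a ^ n)) *
        ((1 - PowerSeries.C b * PowerSeries.X) * PowerSeries.mk (fun n => b ^ n)) by ring,
    one_sub_C_mul_X_mul_geom, one_sub_C_mul_X_mul_geom, one_mul]

/-- Type `A` (cyclic) subgroups of `SL₂(ℂ)`: for `Γ = {diag(ζᵏ, ζ⁻ᵏ) : 0 ≤ k < j} ≅ ℤ/jℤ`
with `ζ = exp(2πi/j)`, and `0 ≤ i < j`, the generating series of the multiplicities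
`mᵢ(n)` of the character `k ↦ ζ^{ik}` in `Symⁿ` of the natural representation satisfies
`Σₙ mᵢ(n)·tⁿ = (1/j)·Σ_{p<j} ζ^{ip}·((1 − tζᵖ)(1 − tζ⁻ᵖ))⁻¹` in `ℂ⟦t⟧`. -/
theorem sl2_typeA_multiplicity_series (j : ℕ) (hj : 1 ≤ j) (i : ℕ) (hi : i < j)
    (ζ : ℂ) (hζ : ζ = Complex.exp (2 * (Real.pi : ℂ) * Complex.I / (j : ℂ))) :
    PowerSeries.mk (fun n => (j : ℂ)⁻¹ *
        ∑ k ∈ Finset.range j,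
          (symMatrix2 n (Matrix.diagonal ![ζ ^ k, ζ⁻¹ ^ k])).trace *
            (starRingEnd ℂ) (ζ ^ (i * k))) =
      (j : ℂ)⁻¹ •
        ∑ p ∈ Finset.range j,
          PowerSeries.C (ζ ^ (i * p)) *
            ((1 - PowerSeries.C (ζ ^ p) * PowerSeries.X) *
              (1 - PowerSeries.C (ζ⁻¹ ^ p) * PowerSeries.X))⁻¹ := by
  have hj0 : (j:ℂ) ≠ 0 := Nat.cast_ne_zero.mpr (by omega)
  have hζj : ζ ^ j = 1 := by
    rw [hζ, ← Complex.exp_nat_mul]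
    rw [show (j:ℂ) * (2 * (Real.pi:ℂ) * Complex.I / (j:ℂ)) = 2 * Real.pi * Complex.I by
      field_simp]
    exact Complex.exp_two_pi_mul_I
  have hconj : (starRingEnd ℂ) ζ = ζ⁻¹ := by
    rw [hζ, ← Complex.exp_conj, ← Complex.exp_neg]
    congr 1
    simp [map_div₀, Complex.conj_ofReal, map_ofNat]
    ring
  have hpow : ∀ k, k < j → ζ ^ ((j - k) % j) = ζ⁻¹ ^ k := by
    intro k hk
    have hmul : ζ ^ ((j - k) % j) * ζ ^ k = 1 := by
      rw [← pow_add]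
      rcases Nat.eq_zero_or_pos k with h | h
      · subst h; simp [Nat.mod_self]
      · rw [show (j - k) % j + k = j by rw [Nat.mod_eq_of_lt (by omega)]; omega, hζj]
    rw [inv_pow]
    exact eq_inv_of_mul_eq_one_left hmul
  ext n
  rw [PowerSeries.coeff_mk, _root_.map_smul]
  simp only [inv_one_sub_mul_one_sub, map_sum, _root_.map_mul, PowerSeries.coeff_C_mul,
    PowerSeries.coeff_mk, smul_eq_mul, symMatrix2_diagonal_trace]
  congr 1
  refine Finset.sum_nbij' (fun k => (j - k) % j) (fun k => (j - k) % j) ?_ ?_ ?_ ?_ ?_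
  · intro k hk
    exact Finset.mem_range.mpr (Nat.mod_lt _ (by omega))
  · intro k hk
    exact Finset.mem_range.mpr (Nat.mod_lt _ (by omega))
  · intro k hk
    rw [Finset.mem_range] at hk
    show (j - (j - k) % j) % j = k
    rcases Nat.eq_zero_or_pos k with h | h
    · subst h; simp [Nat.mod_self]
    · rw [show (j - k) % j = j - k from Nat.mod_eq_of_lt (by omega), Nat.mod_eq_of_lt (by omega)]; omega
  · intro k hk
    rw [Finset.mem_range] at hk
    show (j - (j - k) % j) % j = k
    rcases Nat.eq_zero_or_pos k with h | h
    · subst h; simp [Nat.mod_self]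
    · rw [show (j - k) % j = j - k from Nat.mod_eq_of_lt (by omega), Nat.mod_eq_of_lt (by omega)]; omega
  · intro k hk
    rw [Finset.mem_range] at hk
    have h1 : ζ ^ ((j - k) % j) = ζ⁻¹ ^ k := hpow k hk
    have h2 : ζ⁻¹ ^ ((j - k) % j) = ζ ^ k := by
      rw [inv_pow, h1, inv_pow, inv_inv]
    have h3 : ζ ^ (i * ((j - k) % j)) = (starRingEnd ℂ) (ζ ^ (i * k)) := by
      rw [map_pow, hconj, mul_comm i, pow_mul, h1, ← pow_mul, mul_comm k i]
    rw [h1, h2, h3]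
    have h4 : ∑ m ∈ Finset.range (n + 1), (ζ⁻¹ ^ k) ^ m * (ζ ^ k) ^ (n - m)
        = ∑ m ∈ Finset.range (n + 1), (ζ ^ k) ^ m * (ζ⁻¹ ^ k) ^ (n - m) := by
      rw [← Finset.sum_range_reflect]
      apply Finset.sum_congr rfl
      intro m hm
      rw [Finset.mem_range] at hm
      rw [show n + 1 - 1 - m = n - m by omega, Nat.sub_sub_self (by omega), mul_comm]
    rw [h4, mul_comm]
end

section
/- Let l ≥ 0, let A⁽¹⁾, A⁽²⁾ ∈ M_{l+1}(ℂ) be commuting matrices, and let (v_{m,n})_{m,n∈ℤ} be vectors in ℂ^{l+1} with v_{m,n} = 0 whenever m < 0 or n < 0, satisfying for all m, n ≥ 0 the recurrences A⁽¹⁾·v_{m,n} = v_{m+1,n} + v_{m,n−1} + v_{m−1,n+1} and A⁽²⁾·v_{m,n} = v_{m,n+1} + v_{m−1,n} + v_{m+1,n−1}. Let P(t,u) := Σ_{m,n≥0} v_{m,n}·tᵐuⁿ, a vector of formal power series in ℂ⟦t,u⟧^{l+1}. Then (1 − t·A⁽¹⁾ + t²·A⁽²⁾ − t³)·(1 − u·A⁽²⁾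 + u²·A⁽¹⁾ − u³)·P(t,u) = (1 − tu)·v_{0,0}, where the matrix-valued power series act coordinatewise on P(t,u). -/
open Matrix

namespace TwoVarAux

lemma fin2_pair (d : Fin 2 →₀ ℕ) :
    d = Finsupp.single 0 (d 0) + Finsupp.single 1 (d 1) := by
  ext a
  fin_cases a <;> simp [Finsupp.single_apply]

lemma pair_apply0 (m n : ℕ) :
    ((Finsupp.single (0 : Fin 2) m + Finsupp.single 1 n : Fin 2 →₀ ℕ)) 0 = m := by
  simp [Finsupp.single_apply]

lemma pair_apply1 (m n : ℕ) :
    ((Finsupp.single (0 : Fin 2) m + Finsupp.single 1 n : Fin 2 →₀ ℕ)) 1 = n := by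
  simp [Finsupp.single_apply]

lemma pair_sub_pair (m n k j : ℕ) :
    (Finsupp.single (0 : Fin 2) m + Finsupp.single 1 n)
      - (Finsupp.single 0 k + Finsupp.single 1 j)
    = Finsupp.single 0 (m - k) + Finsupp.single 1 (n - j) := by
  ext a
  fin_cases a <;> simp [Finsupp.tsub_apply, Finsupp.single_apply]

lemma pair_sub_single0 (m n k : ℕ) :
    (Finsupp.single (0 : Fin 2) m + Finsupp.single 1 n) - Finsupp.single 0 k
    = Finsupp.single 0 (m - k) + Finsupp.single 1 n := by
  ext a
  fin_cases a <;> simp [Finsupp.tsub_apply, Finsupp.single_apply]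

lemma pair_sub_single1 (m n k : ℕ) :
    (Finsupp.single (0 : Fin 2) m + Finsupp.single 1 n) - Finsupp.single 1 k
    = Finsupp.single 0 m + Finsupp.single 1 (n - k) := by
  ext a
  fin_cases a <;> simp [Finsupp.tsub_apply, Finsupp.single_apply]

lemma pair_eq_zero (m n : ℕ) :
    (Finsupp.single (0 : Fin 2) m + Finsupp.single 1 n = 0) ↔ (m = 0 ∧ n = 0) := by
  rw [Finsupp.ext_iff]
  constructor
  · intro h
    exact ⟨by simpa using h 0, by simpa [Finsupp.single_apply] using h 1⟩
  · rintro ⟨rfl, rfl⟩ a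
    fin_cases a <;> simp

lemma coeff_term (s : Fin 2) (k : ℕ) (a : ℂ) (f : MvPowerSeries (Fin 2) ℂ)
    (d : Fin 2 →₀ ℕ) :
    MvPowerSeries.coeff (R := ℂ) d ((MvPowerSeries.X s) ^ k * MvPowerSeries.C (σ := Fin 2) (R := ℂ) a * f)
      = if k ≤ d s then a * MvPowerSeries.coeff (R := ℂ) (d - Finsupp.single s k) f else 0 := by
  have h1 : (MvPowerSeries.X s) ^ k * MvPowerSeries.C (σ := Fin 2) (R := ℂ) a
      = MvPowerSeries.monomial (R := ℂ) (Finsupp.single s k) a := by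
    rw [MvPowerSeries.X_pow_eq, ← MvPowerSeries.monomial_zero_eq_C_apply,
      MvPowerSeries.monomial_mul_monomial]
    simp
  rw [h1, MvPowerSeries.coeff_monomial_mul]
  simp [Finsupp.single_le_iff]

lemma coeff_pow_mul (s : Fin 2) (k : ℕ) (f : MvPowerSeries (Fin 2) ℂ) (d : Fin 2 →₀ ℕ) :
    MvPowerSeries.coeff (R := ℂ) d ((MvPowerSeries.X s) ^ k * f)
      = if k ≤ d s then MvPowerSeries.coeff (R := ℂ) (d - Finsupp.single s k) f else 0 := by
  have := coeff_term s k 1 f d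
  simpa using this

lemma coeff_pow_mulVec {N : ℕ} (A : Matrix (Fin N) (Fin N) ℂ)
    (w : Fin N → MvPowerSeries (Fin 2) ℂ) (s : Fin 2) (k : ℕ) (i : Fin N)
    (d : Fin 2 →₀ ℕ) :
    MvPowerSeries.coeff (R := ℂ) d
        ((MvPowerSeries.X s) ^ k * ((A.map ⇑(MvPowerSeries.C (σ := Fin 2) (R := ℂ))).mulVec w) i)
      = if k ≤ d s then
          A.mulVec (fun j => MvPowerSeries.coeff (R := ℂ) (d - Finsupp.single s k) (w j)) i
        else 0 := by
  simp only [Matrix.mulVec, dotProduct, Matrix.map_apply, Finset.mul_sum]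
  rw [map_sum]
  by_cases h : k ≤ d s
  · simp only [← mul_assoc, coeff_term, if_pos h, map_sum]
  · simp only [← mul_assoc, coeff_term, if_neg h, Finset.sum_const_zero]

lemma coeff_one_sub_XX_mul (f : MvPowerSeries (Fin 2) ℂ) (d : Fin 2 →₀ ℕ) :
    MvPowerSeries.coeff (R := ℂ) d
        ((1 - MvPowerSeries.X (0 : Fin 2) * MvPowerSeries.X 1) * f)
      = MvPowerSeries.coeff (R := ℂ) d f
        - (if 1 ≤ d 0 ∧ 1 ≤ d 1 then
            MvPowerSeries.coeff (R := ℂ) (d - (Finsupp.single 0 1 + Finsupp.single 1 1)) f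
          else 0) := by
  have hx : (MvPowerSeries.X (0 : Fin 2) * MvPowerSeries.X 1 : MvPowerSeries (Fin 2) ℂ)
      = MvPowerSeries.monomial (R := ℂ) (Finsupp.single 0 1 + Finsupp.single 1 1) 1 := by
    rw [MvPowerSeries.X, MvPowerSeries.X, MvPowerSeries.monomial_mul_monomial, one_mul]
  have hle : (Finsupp.single (0 : Fin 2) 1 + Finsupp.single 1 1 ≤ d) ↔ (1 ≤ d 0 ∧ 1 ≤ d 1) := by
    rw [Finsupp.le_def]
    constructor
    · intro h
      exact ⟨by simpa using h 0, by simpa [Finsupp.single_apply] using h 1⟩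
    · rintro ⟨h0, h1⟩ a
      fin_cases a <;> simpa [Finsupp.single_apply]
  rw [sub_mul, one_mul, map_sub, hx, MvPowerSeries.coeff_monomial_mul]
  simp [hle]

end TwoVarAux

open Matrix

/-- Let `A⁽¹⁾, A⁽²⁾` be commuting `(l+1) × (l+1)` complex matrices and `(v_{m,n})` vectors
in `ℂ^{l+1}` (zero for negative indices) satisfying the recurrences
`A⁽¹⁾ v_{m,n} = v_{m+1,n} + v_{m,n−1} + v_{m−1,n+1}` and
`A⁽²⁾ v_{m,n} = v_{m,n+1} + v_{m−1,n} + v_{m+1,n−1}`.  Then the vector of power series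
`P(t,u) = Σ v_{m,n} tᵐ uⁿ` satisfies
`(1 − t A⁽¹⁾ + t² A⁽²⁾ − t³)(1 − u A⁽²⁾ + u² A⁽¹⁾ − u³) P(t,u) = (1 − tu) v_{0,0}`. -/
theorem two_variable_multiplicity_series_functional_equation
    (l : ℕ) (A₁ A₂ : Matrix (Fin (l + 1)) (Fin (l + 1)) ℂ)
    (hcomm : A₁ * A₂ = A₂ * A₁)
    (v : ℤ → ℤ → (Fin (l + 1) → ℂ))
    (hneg : ∀ m n : ℤ, m < 0 ∨ n < 0 → v m n = 0)
    (hrec₁ : ∀ m n : ℕ, A₁.mulVec (v m n) =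
      v (m + 1) n + v m (n - 1) + v (m - 1) (n + 1))
    (hrec₂ : ∀ m n : ℕ, A₂.mulVec (v m n) =
      v m (n + 1) + v (m - 1) n + v (m + 1) (n - 1))
    (P : Fin (l + 1) → MvPowerSeries (Fin 2) ℂ)
    (hP : ∀ (i : Fin (l + 1)) (m n : ℕ),
      MvPowerSeries.coeff (R := ℂ) (Finsupp.single 0 m + Finsupp.single 1 n) (P i) = v m n i) :
    ((1 - (MvPowerSeries.X (0 : Fin 2) : MvPowerSeries (Fin 2) ℂ) • A₁.map ⇑(MvPowerSeries.C (σ := Fin 2) (R := ℂ))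
        + (MvPowerSeries.X (0 : Fin 2) : MvPowerSeries (Fin 2) ℂ) ^ 2 • A₂.map ⇑(MvPowerSeries.C (σ := Fin 2) (R := ℂ))
        - (MvPowerSeries.X (0 : Fin 2) : MvPowerSeries (Fin 2) ℂ) ^ 3 • (1 : Matrix (Fin (l + 1)) (Fin (l + 1))
            (MvPowerSeries (Fin 2) ℂ))) *
      (1 - (MvPowerSeries.X (1 : Fin 2) : MvPowerSeries (Fin 2) ℂ) • A₂.map ⇑(MvPowerSeries.C (σ := Fin 2) (R := ℂ))
        + (MvPowerSeries.X (1 : Fin 2) : MvPowerSeries (Fin 2) ℂ) ^ 2 • A₁.map ⇑(MvPowerSeries.C (σ := Fin 2) (R := ℂ))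
        - (MvPowerSeries.X (1 : Fin 2) : MvPowerSeries (Fin 2) ℂ) ^ 3 • (1 : Matrix (Fin (l + 1)) (Fin (l + 1))
            (MvPowerSeries (Fin 2) ℂ)))).mulVec P =
      fun i => (1 - (MvPowerSeries.X (0 : Fin 2) : MvPowerSeries (Fin 2) ℂ) * MvPowerSeries.X (1 : Fin 2)) *
        MvPowerSeries.C (σ := Fin 2) (R := ℂ) (v 0 0 i) := by
  classical
  set t : MvPowerSeries (Fin 2) ℂ := MvPowerSeries.X 0 with ht
  set u : MvPowerSeries (Fin 2) ℂ := MvPowerSeries.X 1 with hu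
  set M₁ := A₁.map ⇑(MvPowerSeries.C (σ := Fin 2) (R := ℂ)) with hM₁
  set M₂ := A₂.map ⇑(MvPowerSeries.C (σ := Fin 2) (R := ℂ)) with hM₂
  set B₁ : Matrix (Fin (l + 1)) (Fin (l + 1)) (MvPowerSeries (Fin 2) ℂ) :=
    1 - t • M₁ + t ^ 2 • M₂ - t ^ 3 • 1 with hB₁
  set B₂ : Matrix (Fin (l + 1)) (Fin (l + 1)) (MvPowerSeries (Fin 2) ℂ) :=
    1 - u • M₂ + u ^ 2 • M₁ - u ^ 3 • 1 with hB₂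
  let S : Fin (l + 1) → MvPowerSeries (Fin 2) ℂ :=
    fun i d => if d 1 = 0 then v (d 0) 0 i else 0
  have hS : ∀ (i : Fin (l + 1)) (d : Fin 2 →₀ ℕ),
      MvPowerSeries.coeff (R := ℂ) d (S i) = if d 1 = 0 then v (d 0) 0 i else 0 := fun i d => rfl
  have vK2 : ∀ (m n : ℕ) (i : Fin (l + 1)),
      v m n i - (if 1 ≤ n then A₂.mulVec (v (m : ℤ) ((n - 1 : ℕ) : ℤ)) i else 0)
        + (if 2 ≤ n then A₁.mulVec (v (m : ℤ) ((n - 2 : ℕ) : ℤ)) i else 0)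
        - (if 3 ≤ n then v (m : ℤ) ((n - 3 : ℕ) : ℤ) i else 0)
      = (if n = 0 then v (m : ℤ) 0 i else 0)
        - (if 1 ≤ m ∧ 1 ≤ n then (if n - 1 = 0 then v ((m - 1 : ℕ) : ℤ) 0 i else 0) else 0) := by
    intro m n i
    match n with
    | 0 => simp
    | 1 =>
      have h2 := congrFun (hrec₂ m 0) i
      simp only [Pi.add_apply] at h2
      rw [if_pos le_rfl, if_neg (show ¬(2:ℕ) ≤ 1 by omega), if_neg (show ¬(3:ℕ) ≤ 1 by omega),
        if_neg (show ¬(1:ℕ) = 0 by omega), if_pos (show (1:ℕ) - 1 = 0 from rfl)]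
      match m with
      | 0 =>
        rw [if_neg (show ¬(1 ≤ 0 ∧ 1 ≤ 1) by omega)]
        have hz1 : v ((0:ℤ) + 1) ((0:ℤ) - 1) i = 0 := by
          rw [hneg _ _ (Or.inr (by norm_num))]; rfl
        have hz2 : v ((0:ℤ) - 1) (0:ℤ) i = 0 := by
          rw [hneg _ _ (Or.inl (by norm_num))]; rfl
        push_cast at h2 hz1 hz2 ⊢
        ring_nf at h2 hz1 hz2 ⊢
        linear_combination -h2 - hz1 - hz2
      | (m+1) =>
        rw [if_pos (show 1 ≤ m + 1 ∧ 1 ≤ 1 by omega)]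
        have hz1 : v ((m:ℤ) + 1 + 1) ((0:ℤ) - 1) i = 0 := by
          rw [hneg _ _ (Or.inr (by norm_num))]; rfl
        push_cast at h2 hz1 ⊢
        ring_nf at h2 hz1 ⊢
        linear_combination -h2 - hz1
    | 2 =>
      have h2 := congrFun (hrec₂ m 1) i
      have h1 := congrFun (hrec₁ m 0) i
      simp only [Pi.add_apply] at h2 h1
      have hz : v (m:ℤ) ((0:ℤ) - 1) i = 0 := by
        rw [hneg _ _ (Or.inr (by norm_num))]; rfl
      rw [if_pos (show (1:ℕ) ≤ 2 by omega), if_pos le_rfl, if_neg (show ¬(3:ℕ) ≤ 2 by omega),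
        if_neg (show ¬(2:ℕ) = 0 by omega), if_neg (show ¬((2:ℕ) - 1 = 0) by omega), ite_self]
      push_cast at h1 h2 hz ⊢
      ring_nf at h1 h2 hz ⊢
      linear_combination -h2 + h1 + hz
    | (k + 3) =>
      have h2 := congrFun (hrec₂ m (k + 2)) i
      have h1 := congrFun (hrec₁ m (k + 1)) i
      simp only [Pi.add_apply] at h2 h1
      rw [if_pos (show 1 ≤ k + 3 by omega), if_pos (show 2 ≤ k + 3 by omega),
        if_pos (show 3 ≤ k + 3 by omega), if_neg (show ¬(k + 3 = 0) by omega),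
        if_neg (show ¬(k + 3 - 1 = 0) by omega), ite_self]
      simp only [show k + 3 - 1 = k + 2 from rfl, show k + 3 - 2 = k + 1 from rfl,
        show k + 3 - 3 = k from rfl]
      push_cast at h2 h1 ⊢
      ring_nf at h2 h1 ⊢
      linear_combination -h2 + h1
  have vK1 : ∀ (m : ℕ) (i : Fin (l + 1)),
      v (m : ℤ) 0 i - (if 1 ≤ m then A₁.mulVec (v ((m - 1 : ℕ) : ℤ) 0) i else 0)
        + (if 2 ≤ m then A₂.mulVec (v ((m - 2 : ℕ) : ℤ) 0) i else 0)
        - (if 3 ≤ m then v ((m - 3 : ℕ) : ℤ) 0 i else 0)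
      = if m = 0 then v 0 0 i else 0 := by
    intro m i
    match m with
    | 0 => simp
    | 1 =>
      have h1 := congrFun (hrec₁ 0 0) i
      simp only [Pi.add_apply] at h1
      have hz1 : v (0:ℤ) ((0:ℤ) - 1) i = 0 := by
        rw [hneg _ _ (Or.inr (by norm_num))]; rfl
      have hz2 : v ((0:ℤ) - 1) ((0:ℤ) + 1) i = 0 := by
        rw [hneg _ _ (Or.inl (by norm_num))]; rfl
      rw [if_pos le_rfl, if_neg (show ¬(2:ℕ) ≤ 1 by omega), if_neg (show ¬(3:ℕ) ≤ 1 by omega),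
        if_neg (show ¬(1:ℕ) = 0 by omega)]
      push_cast at h1 hz1 hz2 ⊢
      ring_nf at h1 hz1 hz2 ⊢
      linear_combination -h1 - hz1 - hz2
    | 2 =>
      have h1 := congrFun (hrec₁ 1 0) i
      have h2 := congrFun (hrec₂ 0 0) i
      simp only [Pi.add_apply] at h1 h2
      have hz1 : v (1:ℤ) ((0:ℤ) - 1) i = 0 := by
        rw [hneg _ _ (Or.inr (by norm_num))]; rfl
      have hz2 : v ((0:ℤ) - 1) (0:ℤ) i = 0 := by
        rw [hneg _ _ (Or.inl (by norm_num))]; rfl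
      have hz3 : v ((0:ℤ) + 1) ((0:ℤ) - 1) i = 0 := by
        rw [hneg _ _ (Or.inr (by norm_num))]; rfl
      rw [if_pos (show (1:ℕ) ≤ 2 by omega), if_pos le_rfl, if_neg (show ¬(3:ℕ) ≤ 2 by omega),
        if_neg (show ¬(2:ℕ) = 0 by omega)]
      push_cast at h1 h2 hz1 hz2 hz3 ⊢
      ring_nf at h1 h2 hz1 hz2 hz3 ⊢
      linear_combination -h1 + h2 + hz1 + hz2 - hz3
    | (k + 3) =>
      have h1 := congrFun (hrec₁ (k + 2) 0) i
      have h2 := congrFun (hrec₂ (k + 1) 0) i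
      simp only [Pi.add_apply] at h1 h2
      rw [if_pos (show 1 ≤ k + 3 by omega), if_pos (show 2 ≤ k + 3 by omega),
        if_pos (show 3 ≤ k + 3 by omega), if_neg (show ¬(k + 3 = 0) by omega)]
      simp only [show k + 3 - 1 = k + 2 from rfl, show k + 3 - 2 = k + 1 from rfl,
        show k + 3 - 3 = k from rfl]
      push_cast at h1 h2 ⊢
      ring_nf at h1 h2 ⊢
      linear_combination -h1 + h2
  have hB₂P : B₂.mulVec P = fun i => (1 - t * u) * S i := by
    have hdec : B₂.mulVec P = P - u ^ 1 • M₂.mulVec P + u ^ 2 • M₁.mulVec P - u ^ 3 • P := by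
      rw [hB₂, Matrix.sub_mulVec, Matrix.add_mulVec, Matrix.sub_mulVec, Matrix.one_mulVec,
        Matrix.smul_mulVec, Matrix.smul_mulVec, Matrix.smul_mulVec,
        Matrix.one_mulVec, pow_one]
    rw [hdec]
    funext i
    apply MvPowerSeries.ext
    intro d
    obtain ⟨m, n, rfl⟩ : ∃ m n : ℕ, d = Finsupp.single 0 m + Finsupp.single 1 n :=
      ⟨d 0, d 1, TwoVarAux.fin2_pair d⟩
    simp only [Pi.sub_apply, Pi.add_apply, Pi.smul_apply, smul_eq_mul, map_sub, map_add,
      ht, hu, hM₁, hM₂]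
    rw [TwoVarAux.coeff_pow_mulVec, TwoVarAux.coeff_pow_mulVec, TwoVarAux.coeff_pow_mul,
      TwoVarAux.coeff_one_sub_XX_mul]
    simp only [TwoVarAux.pair_apply0, TwoVarAux.pair_apply1, TwoVarAux.pair_sub_single1,
      TwoVarAux.pair_sub_pair, hP, hS]
    exact vK2 m n i
  have hB₁S : B₁.mulVec S = fun i => MvPowerSeries.C (σ := Fin 2) (R := ℂ) (v 0 0 i) := by
    have hdec : B₁.mulVec S = S - t ^ 1 • M₁.mulVec S + t ^ 2 • M₂.mulVec S - t ^ 3 • S := by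
      rw [hB₁, Matrix.sub_mulVec, Matrix.add_mulVec, Matrix.sub_mulVec, Matrix.one_mulVec,
        Matrix.smul_mulVec, Matrix.smul_mulVec, Matrix.smul_mulVec,
        Matrix.one_mulVec, pow_one]
    rw [hdec]
    funext i
    apply MvPowerSeries.ext
    intro d
    obtain ⟨m, n, rfl⟩ : ∃ m n : ℕ, d = Finsupp.single 0 m + Finsupp.single 1 n :=
      ⟨d 0, d 1, TwoVarAux.fin2_pair d⟩
    simp only [Pi.sub_apply, Pi.add_apply, Pi.smul_apply, smul_eq_mul, map_sub, map_add,
      ht, hu, hM₁, hM₂]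
    rw [TwoVarAux.coeff_pow_mulVec, TwoVarAux.coeff_pow_mulVec, TwoVarAux.coeff_pow_mul,
      MvPowerSeries.coeff_C]
    simp only [TwoVarAux.pair_apply0, TwoVarAux.pair_apply1, TwoVarAux.pair_sub_single0,
      hS, TwoVarAux.pair_eq_zero]
    by_cases hn : n = 0
    · subst hn
      simp only [eq_self_iff_true, if_true, and_true, ite_true]
      exact vK1 m i
    · have hz0 : (fun _ : Fin (l + 1) => (0 : ℂ)) = 0 := rfl
      simp [hn, hz0, Matrix.mulVec_zero]
  rw [← Matrix.mulVec_mulVec, hB₂P]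
  have hsm : (fun i => (1 - t * u) * S i) = (1 - t * u) • S := rfl
  rw [hsm, Matrix.mulVec_smul, hB₁S]
  funext i
  simp [smul_eq_mul]
end

section
/- Let l ≥ 0, let A⁽¹⁾, A⁽²⁾ ∈ M_{l+1}(ℂ) be commuting matrices, and let (v_{m,n})_{m,n∈ℤ} be vectors in ℂ^{l+1} with v_{m,n} = 0 whenever m < 0 or n < 0, satisfying for all m, n ≥ 0 the recurrences A⁽¹⁾·v_{m,n} = v_{m+1,n} + v_{m,n−1} + v_{m−1,n+1} and A⁽²⁾·v_{m,n} = v_{m,n+1} + v_{m−1,n} + v_{m+1,n−1}. Then for each coordinate i ∈ {0, …, l}, the formal power series P(t,u)ᵢ := Σ_{m,n≥0} (v_{m,n})ᵢ·tᵐuⁿ ∈ ℂ⟦t,u⟧ is rational: there exist polynomials N, D ∈ ℂ[t,u] with D(0,0) ≠ 0 such that D·P(t,u)ᵢ = N in ℂ⟦t,u⟧. -/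
open Matrix
namespace TwoVarAux

variable {l : ℕ}

lemma E1 (A₁ A₂ : Matrix (Fin (l + 1)) (Fin (l + 1)) ℂ)
    (v : ℤ → ℤ → (Fin (l + 1) → ℂ))
    (hneg : ∀ m n : ℤ, m < 0 ∨ n < 0 → v m n = 0)
    (hrec₁ : ∀ m n : ℕ, A₁.mulVec (v m n) =
      v (m + 1) n + v m (n - 1) + v (m - 1) (n + 1))
    (hrec₂ : ∀ m n : ℕ, A₂.mulVec (v m n) =
      v m (n + 1) + v (m - 1) n + v (m + 1) (n - 1)) :
    ∀ m n : ℤ, v m n - A₂ *ᵥ v m (n - 1) + A₁ *ᵥ v m (n - 2) - v m (n - 3)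
      = (if n = 0 then v m 0 else 0) - (if n = 1 then v (m - 1) 0 else 0) := by
  intro m n
  rcases lt_or_ge m 0 with hm | hm
  · rw [hneg m n (Or.inl hm), hneg m (n-1) (Or.inl hm), hneg m (n-2) (Or.inl hm),
      hneg m (n-3) (Or.inl hm), hneg m 0 (Or.inl hm), hneg (m-1) 0 (Or.inl (by omega))]
    simp
  rcases lt_or_ge n 0 with hn | hn
  · rw [hneg m n (Or.inr hn), hneg m (n-1) (Or.inr (by omega)), hneg m (n-2) (Or.inr (by omega)),
      hneg m (n-3) (Or.inr (by omega)), if_neg (by omega), if_neg (by omega)]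
    simp
  lift m to ℕ using hm
  lift n to ℕ using hn
  rcases n with _ | _ | n
  · push_cast
    rw [hneg _ (-1) (Or.inr (by omega)), hneg _ (-2) (Or.inr (by omega)),
      hneg _ (-3) (Or.inr (by omega))]
    simp
  · have h2 := hrec₂ m 0
    push_cast at h2 ⊢
    rw [hneg (↑m + 1) (-1) (Or.inr (by omega))] at h2
    rw [hneg _ (-1) (Or.inr (by omega)), hneg _ (-2) (Or.inr (by omega)), h2, Matrix.mulVec_zero]
    abel
  · have h2 := hrec₂ m (n + 1)
    have h1 := hrec₁ m n
    push_cast at h1 h2 ⊢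
    rw [show (n:ℤ) + 1 + 1 - 1 = n + 1 by ring, show (n:ℤ) + 1 + 1 - 2 = n by ring,
      show (n:ℤ) + 1 + 1 - 3 = n - 1 by ring]
    rw [show (n:ℤ) + 1 - 1 = n by ring, show (n:ℤ) + 1 + 1 = n + 1 + 1 by ring] at h2
    rw [if_neg (by omega), if_neg (by omega), h1, h2]
    abel

lemma E2 (A₁ A₂ : Matrix (Fin (l + 1)) (Fin (l + 1)) ℂ)
    (v : ℤ → ℤ → (Fin (l + 1) → ℂ))
    (hneg : ∀ m n : ℤ, m < 0 ∨ n < 0 → v m n = 0)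
    (hrec₁ : ∀ m n : ℕ, A₁.mulVec (v m n) =
      v (m + 1) n + v m (n - 1) + v (m - 1) (n + 1))
    (hrec₂ : ∀ m n : ℕ, A₂.mulVec (v m n) =
      v m (n + 1) + v (m - 1) n + v (m + 1) (n - 1)) :
    ∀ m n : ℤ, v m n - A₁ *ᵥ v (m - 1) n + A₂ *ᵥ v (m - 2) n - v (m - 3) n
      = (if m = 0 then v 0 n else 0) - (if m = 1 then v 0 (n - 1) else 0) := by
  intro m n
  rcases lt_or_ge n 0 with hn | hn
  · rw [hneg m n (Or.inr hn), hneg (m-1) n (Or.inr hn), hneg (m-2) n (Or.inr hn),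
      hneg (m-3) n (Or.inr hn), hneg 0 n (Or.inr hn), hneg 0 (n-1) (Or.inr (by omega))]
    simp
  rcases lt_or_ge m 0 with hm | hm
  · rw [hneg m n (Or.inl hm), hneg (m-1) n (Or.inl (by omega)), hneg (m-2) n (Or.inl (by omega)),
      hneg (m-3) n (Or.inl (by omega)), if_neg (by omega), if_neg (by omega)]
    simp
  lift m to ℕ using hm
  lift n to ℕ using hn
  rcases m with _ | _ | m
  · push_cast
    rw [hneg (-1) _ (Or.inl (by omega)), hneg (-2) _ (Or.inl (by omega)),
      hneg (-3) _ (Or.inl (by omega))]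
    simp
  · have h1 := hrec₁ 0 n
    push_cast at h1 ⊢
    rw [hneg (-1) (↑n + 1) (Or.inl (by omega))] at h1
    rw [hneg (-1) _ (Or.inl (by omega)), hneg (-2) _ (Or.inl (by omega)), h1, Matrix.mulVec_zero]
    abel
  · have h1 := hrec₁ (m + 1) n
    have h2 := hrec₂ m n
    push_cast at h1 h2 ⊢
    rw [show (m:ℤ) + 1 + 1 - 1 = m + 1 by ring, show (m:ℤ) + 1 + 1 - 2 = m by ring,
      show (m:ℤ) + 1 + 1 - 3 = m - 1 by ring]
    rw [show (m:ℤ) + 1 - 1 = m by ring, show (m:ℤ) + 1 + 1 = m + 1 + 1 by ring] at h1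
    rw [if_neg (by omega), if_neg (by omega), h1, h2]
    abel

end TwoVarAux

namespace TwoVarAux

variable {l : ℕ}

lemma mulVec_sum {ι : Type*} (s : Finset ι) (A : Matrix (Fin (l + 1)) (Fin (l + 1)) ℂ)
    (w : ι → (Fin (l + 1) → ℂ)) :
    A *ᵥ (∑ b ∈ s, w b) = ∑ b ∈ s, A *ᵥ w b := by
  have := map_sum A.mulVecLin w s
  simpa only [Matrix.mulVecLin_apply] using this

lemma sum4 (X Y : Matrix (Fin (l + 1)) (Fin (l + 1)) ℂ) (w : ℕ → (Fin (l + 1) → ℂ)) :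
    ∑ b : Fin 4, (![1, -X, Y, -1] b) *ᵥ w (b : ℕ)
      = w 0 - X *ᵥ w 1 + Y *ᵥ w 2 - w 3 := by
  simp only [Fin.sum_univ_four, show ((0 : Fin 4) : ℕ) = 0 from rfl,
    show ((1 : Fin 4) : ℕ) = 1 from rfl, show ((2 : Fin 4) : ℕ) = 2 from rfl,
    show ((3 : Fin 4) : ℕ) = 3 from rfl, Matrix.cons_val_zero, Matrix.cons_val_one,
    Matrix.head_cons]
  rw [show (![1, -X, Y, -1] : Fin 4 → _) 2 = Y from rfl,
    show (![1, -X, Y, -1] : Fin 4 → _) 3 = -1 from rfl,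
    Matrix.neg_mulVec, Matrix.one_mulVec, Matrix.neg_mulVec, Matrix.one_mulVec]
  abel

end TwoVarAux

namespace TwoVarAux

variable {l : ℕ}

/-- The master coefficient identity. -/
lemma key (A₁ A₂ : Matrix (Fin (l + 1)) (Fin (l + 1)) ℂ)
    (v : ℤ → ℤ → (Fin (l + 1) → ℂ))
    (hneg : ∀ m n : ℤ, m < 0 ∨ n < 0 → v m n = 0)
    (hrec₁ : ∀ m n : ℕ, A₁.mulVec (v m n) =
      v (m + 1) n + v m (n - 1) + v (m - 1) (n + 1))
    (hrec₂ : ∀ m n : ℕ, A₂.mulVec (v m n) =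
      v m (n + 1) + v (m - 1) n + v (m + 1) (n - 1)) :
    ∀ m n : ℤ,
      ∑ a : Fin 4, ∑ b : Fin 4,
        ((![1, -A₁, A₂, -1] a) * (![1, -A₂, A₁, -1] b)) *ᵥ
          v (m - ((a : ℕ) : ℤ)) (n - ((b : ℕ) : ℤ))
      = (if m = 0 ∧ n = 0 then v 0 0 else 0) - (if m = 1 ∧ n = 1 then v 0 0 else 0) := by
  intro m n
  have step1 : ∀ a : Fin 4,
      ∑ b : Fin 4, ((![1, -A₁, A₂, -1] a) * (![1, -A₂, A₁, -1] b)) *ᵥ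
          v (m - ((a : ℕ) : ℤ)) (n - ((b : ℕ) : ℤ))
      = (![1, -A₁, A₂, -1] a) *ᵥ
          ((if n = 0 then v (m - ((a : ℕ) : ℤ)) 0 else 0)
            - (if n = 1 then v (m - ((a : ℕ) : ℤ) - 1) 0 else 0)) := by
    intro a
    have h0 : ∑ b : Fin 4, ((![1, -A₁, A₂, -1] a) * (![1, -A₂, A₁, -1] b)) *ᵥ
          v (m - ((a : ℕ) : ℤ)) (n - ((b : ℕ) : ℤ))
        = (![1, -A₁, A₂, -1] a) *ᵥ
            ∑ b : Fin 4, (![1, -A₂, A₁, -1] b) *ᵥ v (m - ((a : ℕ) : ℤ)) (n - ((b : ℕ) : ℤ)) := by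
      rw [mulVec_sum]
      exact Finset.sum_congr rfl fun b _ => (Matrix.mulVec_mulVec _ _ _).symm
    rw [h0]
    refine congrArg (fun x => (![1, -A₁, A₂, -1] a) *ᵥ x) ?_
    rw [sum4 A₂ A₁ (fun b => v (m - ((a : ℕ) : ℤ)) (n - (b : ℤ)))]
    push_cast
    rw [show n - (0:ℤ) = n by ring, show n - (2:ℤ) = n - 2 by ring,
      show n - (3:ℤ) = n - 3 by ring]
    exact E1 A₁ A₂ v hneg hrec₁ hrec₂ (m - ((a : ℕ) : ℤ)) n
  rw [Finset.sum_congr rfl fun a _ => step1 a]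
  by_cases hn0 : n = 0
  · subst hn0
    rw [Finset.sum_congr rfl (fun a _ => by
      rw [if_pos rfl, if_neg (by norm_num : ¬ (0:ℤ) = 1), sub_zero])]
    rw [sum4 A₁ A₂ (fun a => v (m - (a : ℤ)) 0)]
    push_cast
    rw [show m - (0:ℤ) = m by ring, show m - (2:ℤ) = m - 2 by ring,
      show m - (3:ℤ) = m - 3 by ring]
    have h2 := E2 A₁ A₂ v hneg hrec₁ hrec₂ m 0
    rw [hneg 0 (0 - 1) (Or.inr (by omega))] at h2
    rw [h2]
    by_cases hm0 : m = 0
    · subst hm0; simp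
    · by_cases hm1 : m = 1
      · subst hm1; simp
      · simp [hm0, hm1]
  · by_cases hn1 : n = 1
    · subst hn1
      rw [Finset.sum_congr rfl (fun a _ => by
        rw [if_neg (by norm_num : ¬ (1:ℤ) = 0), if_pos rfl, zero_sub, Matrix.mulVec_neg,
          show m - ((a:ℕ):ℤ) - 1 = m - 1 - ((a:ℕ):ℤ) by ring])]
      rw [Finset.sum_neg_distrib, sum4 A₁ A₂ (fun a => v (m - 1 - (a : ℤ)) 0)]
      push_cast
      rw [show m - 1 - (0:ℤ) = m - 1 by ring, show m - 1 - (1:ℤ) = m - 1 - 1 by ring,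
        show m - 1 - (2:ℤ) = m - 1 - 2 by ring, show m - 1 - (3:ℤ) = m - 1 - 3 by ring]
      have h2 := E2 A₁ A₂ v hneg hrec₁ hrec₂ (m - 1) 0
      rw [hneg 0 (0 - 1) (Or.inr (by omega))] at h2
      rw [h2]
      by_cases hm1 : m = 1
      · subst hm1; simp
      · simp [hm1, show m - 1 ≠ 0 by omega]
    · rw [Finset.sum_congr rfl (fun a _ => by
        rw [if_neg hn0, if_neg hn1, sub_zero, Matrix.mulVec_zero])]
      rw [Finset.sum_const_zero, if_neg (fun h => hn0 h.2), if_neg (fun h => hn1 h.2), sub_zero]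

end TwoVarAux

namespace TwoVarAux

lemma e_apply0 (a b : ℕ) : ((Finsupp.single (0 : Fin 2) a + Finsupp.single 1 b : Fin 2 →₀ ℕ)) 0 = a := by
  simp [Finsupp.single_apply]

lemma e_apply1 (a b : ℕ) : ((Finsupp.single (0 : Fin 2) a + Finsupp.single 1 b : Fin 2 →₀ ℕ)) 1 = b := by
  simp [Finsupp.single_apply]

lemma s_decomp (s : Fin 2 →₀ ℕ) :
    s = Finsupp.single 0 (s 0) + Finsupp.single 1 (s 1) := by
  ext x
  fin_cases x
  · exact (e_apply0 (s 0) (s 1)).symm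
  · exact (e_apply1 (s 0) (s 1)).symm

lemma e_eq_iff (a b a' b' : ℕ) :
    (Finsupp.single (0 : Fin 2) a + Finsupp.single 1 b
      = Finsupp.single 0 a' + Finsupp.single 1 b') ↔ a = a' ∧ b = b' := by
  constructor
  · intro h
    constructor
    · have := DFunLike.congr_fun h 0
      rwa [e_apply0, e_apply0] at this
    · have := DFunLike.congr_fun h 1
      rwa [e_apply1, e_apply1] at this
  · rintro ⟨rfl, rfl⟩; rfl

lemma e_eq_zero (a b : ℕ) :
    (Finsupp.single (0 : Fin 2) a + Finsupp.single 1 b = 0) ↔ a = 0 ∧ b = 0 := by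
  rw [show (0 : Fin 2 →₀ ℕ) = Finsupp.single 0 0 + Finsupp.single 1 0 by simp]
  exact e_eq_iff a b 0 0

lemma s_eq_e (s : Fin 2 →₀ ℕ) (a b : ℕ) :
    (s = Finsupp.single 0 a + Finsupp.single 1 b) ↔ s 0 = a ∧ s 1 = b := by
  constructor
  · rintro rfl; exact ⟨e_apply0 a b, e_apply1 a b⟩
  · rintro ⟨ha, hb⟩
    rw [s_decomp s, ha, hb]

lemma e_le (a b : ℕ) (s : Fin 2 →₀ ℕ) :
    (Finsupp.single (0 : Fin 2) a + Finsupp.single 1 b ≤ s) ↔ a ≤ s 0 ∧ b ≤ s 1 := by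
  rw [Finsupp.le_def, Fin.forall_fin_two, e_apply0, e_apply1]

lemma sub_e_apply0 (a b : ℕ) (s : Fin 2 →₀ ℕ) :
    ((s - (Finsupp.single (0 : Fin 2) a + Finsupp.single 1 b) : Fin 2 →₀ ℕ)) 0 = s 0 - a := by
  rw [Finsupp.tsub_apply, e_apply0]

lemma sub_e_apply1 (a b : ℕ) (s : Fin 2 →₀ ℕ) :
    ((s - (Finsupp.single (0 : Fin 2) a + Finsupp.single 1 b) : Fin 2 →₀ ℕ)) 1 = s 1 - b := by
  rw [Finsupp.tsub_apply, e_apply1]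

lemma aeval_eq_coe (p : MvPolynomial (Fin 2) ℂ) :
    MvPolynomial.aeval (fun k : Fin 2 => (MvPowerSeries.X k : MvPowerSeries (Fin 2) ℂ)) p
      = ↑p := by
  induction p using MvPolynomial.induction_on with
  | C a => simp [MvPolynomial.coe_C, MvPowerSeries.algebraMap_apply]
  | add p q hp hq => simp [MvPolynomial.coe_add, hp, hq]
  | mul_X p s hp => simp [MvPolynomial.coe_mul, MvPolynomial.coe_X, hp]

end TwoVarAux


open TwoVarAux

/-- Let `A⁽¹⁾, A⁽²⁾` be commuting `(l+1) × (l+1)` complex matrices and `(v_{m,n})` vectors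
in `ℂ^{l+1}` (zero for negative indices) satisfying the recurrences
`A⁽¹⁾ v_{m,n} = v_{m+1,n} + v_{m,n−1} + v_{m−1,n+1}` and
`A⁽²⁾ v_{m,n} = v_{m,n+1} + v_{m−1,n} + v_{m+1,n−1}`.  Then each coordinate of the vector
of power series `P(t,u) = Σ v_{m,n} tᵐ uⁿ` is rational: there are `N, D ∈ ℂ[t,u]` with
`D(0,0) ≠ 0` and `D·P(t,u)ᵢ = N` in `ℂ⟦t,u⟧`. -/
theorem two_variable_multiplicity_series_rational
    (l : ℕ) (A₁ A₂ : Matrix (Fin (l + 1)) (Fin (l + 1)) ℂ)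
    (hcomm : A₁ * A₂ = A₂ * A₁)
    (v : ℤ → ℤ → (Fin (l + 1) → ℂ))
    (hneg : ∀ m n : ℤ, m < 0 ∨ n < 0 → v m n = 0)
    (hrec₁ : ∀ m n : ℕ, A₁.mulVec (v m n) =
      v (m + 1) n + v m (n - 1) + v (m - 1) (n + 1))
    (hrec₂ : ∀ m n : ℕ, A₂.mulVec (v m n) =
      v m (n + 1) + v (m - 1) n + v (m + 1) (n - 1))
    (P : Fin (l + 1) → MvPowerSeries (Fin 2) ℂ)
    (hP : ∀ (i : Fin (l + 1)) (m n : ℕ),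
      MvPowerSeries.coeff (Finsupp.single 0 m + Finsupp.single 1 n) (P i) = v m n i) :
    ∀ i : Fin (l + 1), ∃ N D : MvPolynomial (Fin 2) ℂ,
      MvPolynomial.coeff 0 D ≠ 0 ∧
      MvPolynomial.aeval
          (fun k : Fin 2 => (MvPowerSeries.X k : MvPowerSeries (Fin 2) ℂ)) D * P i =
        MvPolynomial.aeval
          (fun k : Fin 2 => (MvPowerSeries.X k : MvPowerSeries (Fin 2) ℂ)) N := by
  classical
  intro i
  set M' : Matrix (Fin (l + 1)) (Fin (l + 1)) (MvPolynomial (Fin 2) ℂ) :=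
    Matrix.of fun i j => ∑ a : Fin 4, ∑ b : Fin 4,
      MvPolynomial.monomial (Finsupp.single 0 (a : ℕ) + Finsupp.single 1 (b : ℕ))
        (((![1, -A₁, A₂, -1] a) * (![1, -A₂, A₁, -1] b)) i j) with hM'
  set q : Fin (l + 1) → MvPolynomial (Fin 2) ℂ :=
    fun j => MvPolynomial.C (v 0 0 j)
      - MvPolynomial.monomial (Finsupp.single 0 1 + Finsupp.single 1 1) (v 0 0 j) with hq
  have hPs : ∀ (j : Fin (l + 1)) (s : Fin 2 →₀ ℕ),
      MvPowerSeries.coeff s (P j) = v (s 0) (s 1) j := by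
    intro j s
    conv_lhs => rw [s_decomp s]
    exact hP j (s 0) (s 1)
  -- the master identity over power series
  have hG : ∀ i0 : Fin (l + 1),
      ∑ j, (↑(M' i0 j) : MvPowerSeries (Fin 2) ℂ) * P j = ↑(q i0) := by
    intro i0
    apply MvPowerSeries.ext
    intro s
    have hkey := key A₁ A₂ v hneg hrec₁ hrec₂ (s 0 : ℤ) (s 1 : ℤ)
    have hterm : ∀ j, MvPowerSeries.coeff s ((↑(M' i0 j) : MvPowerSeries (Fin 2) ℂ) * P j)
        = ∑ a : Fin 4, ∑ b : Fin 4,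
            (if (a : ℕ) ≤ s 0 ∧ (b : ℕ) ≤ s 1 then
              (((![1, -A₁, A₂, -1] a) * (![1, -A₂, A₁, -1] b)) i0 j)
                * v ((s 0 - (a : ℕ) : ℕ) : ℤ) ((s 1 - (b : ℕ) : ℕ) : ℤ) j
            else 0) := by
      intro j
      have hcoe : (↑(M' i0 j) : MvPowerSeries (Fin 2) ℂ)
          = ∑ a : Fin 4, ∑ b : Fin 4,
              MvPowerSeries.monomial (Finsupp.single 0 (a : ℕ) + Finsupp.single 1 (b : ℕ))
                (((![1, -A₁, A₂, -1] a) * (![1, -A₂, A₁, -1] b)) i0 j) := by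
        rw [hM']
        simp only [Matrix.of_apply]
        rw [← MvPolynomial.coeToMvPowerSeries.ringHom_apply, map_sum]
        refine Finset.sum_congr rfl fun a _ => ?_
        rw [map_sum]
        refine Finset.sum_congr rfl fun b _ => ?_
        rw [MvPolynomial.coeToMvPowerSeries.ringHom_apply, MvPolynomial.coe_monomial]
      rw [hcoe, Finset.sum_mul, map_sum]
      refine Finset.sum_congr rfl fun a _ => ?_
      rw [Finset.sum_mul, map_sum]
      refine Finset.sum_congr rfl fun b _ => ?_
      rw [MvPowerSeries.coeff_monomial_mul]
      by_cases hab : (a : ℕ) ≤ s 0 ∧ (b : ℕ) ≤ s 1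
      · rw [if_pos ((e_le a b s).mpr hab), if_pos hab, hPs j, sub_e_apply0, sub_e_apply1]
      · rw [if_neg (fun hle => hab ((e_le a b s).mp hle)), if_neg hab]
    rw [map_sum, Finset.sum_congr rfl fun j _ => hterm j]
    -- reorganize sums: j outer → j inner
    rw [Finset.sum_comm]
    rw [Finset.sum_congr rfl fun a _ => Finset.sum_comm]
    -- identify with the key identity
    have hswap : ∀ (a b : Fin 4),
        (∑ j, if (a : ℕ) ≤ s 0 ∧ (b : ℕ) ≤ s 1 then
            (((![1, -A₁, A₂, -1] a) * (![1, -A₂, A₁, -1] b)) i0 j)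
              * v ((s 0 - (a : ℕ) : ℕ) : ℤ) ((s 1 - (b : ℕ) : ℕ) : ℤ) j
          else 0)
        = (((![1, -A₁, A₂, -1] a) * (![1, -A₂, A₁, -1] b)) *ᵥ
            v ((s 0 : ℤ) - ((a : ℕ) : ℤ)) ((s 1 : ℤ) - ((b : ℕ) : ℤ))) i0 := by
      intro a b
      by_cases hab : (a : ℕ) ≤ s 0 ∧ (b : ℕ) ≤ s 1
      · rw [Finset.sum_congr rfl fun j _ => if_pos hab,
          Int.ofNat_sub hab.1, Int.ofNat_sub hab.2]
        rfl
      · rw [Finset.sum_congr rfl fun j _ => if_neg hab, Finset.sum_const_zero]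
        rcases not_and_or.mp hab with h | h
        · rw [hneg ((s 0 : ℤ) - ((a : ℕ) : ℤ)) _ (Or.inl (by omega)), Matrix.mulVec_zero]
          rfl
        · rw [hneg _ ((s 1 : ℤ) - ((b : ℕ) : ℤ)) (Or.inr (by omega)), Matrix.mulVec_zero]
          rfl
    rw [Finset.sum_congr rfl fun a _ => Finset.sum_congr rfl fun b _ => hswap a b]
    have hkey' := congrFun hkey i0
    simp only [Finset.sum_apply, Pi.sub_apply] at hkey'
    rw [hkey']
    -- now compute the right-hand side coefficient
    rw [hq, MvPolynomial.coeff_coe, MvPolynomial.coeff_sub, MvPolynomial.coeff_C,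
      MvPolynomial.coeff_monomial]
    have hee : ∀ (a b : ℕ),
        ((Finsupp.single (0 : Fin 2) a + Finsupp.single 1 b : Fin 2 →₀ ℕ) = s)
          ↔ s 0 = a ∧ s 1 = b := fun a b => eq_comm.trans (s_eq_e s a b)
    have c1 : ((s 0 : ℤ) = 0 ∧ (s 1 : ℤ) = 0) ↔ ((0 : Fin 2 →₀ ℕ) = s) := by
      rw [show (0 : Fin 2 →₀ ℕ) = Finsupp.single 0 0 + Finsupp.single 1 0 by simp,
        hee 0 0]
      omega
    have c2 : ((s 0 : ℤ) = 1 ∧ (s 1 : ℤ) = 1) ↔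
        ((Finsupp.single (0 : Fin 2) 1 + Finsupp.single 1 1 : Fin 2 →₀ ℕ) = s) := by
      rw [hee 1 1]
      omega
    have h1 : (if (s 0 : ℤ) = 0 ∧ (s 1 : ℤ) = 0 then v 0 0 else 0) i0
        = (if (0 : Fin 2 →₀ ℕ) = s then v 0 0 i0 else (0 : ℂ)) := by
      rw [if_congr c1 rfl rfl]
      split_ifs <;> rfl
    have h2 : (if (s 0 : ℤ) = 1 ∧ (s 1 : ℤ) = 1 then v 0 0 else 0) i0
        = (if (Finsupp.single (0 : Fin 2) 1 + Finsupp.single 1 1 : Fin 2 →₀ ℕ) = s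
            then v 0 0 i0 else (0 : ℂ)) := by
      rw [if_congr c2 rfl rfl]
      split_ifs <;> rfl
    rw [h1, h2]
  -- assemble the rational expression
  set φ : MvPolynomial (Fin 2) ℂ →+* MvPowerSeries (Fin 2) ℂ :=
    MvPolynomial.coeToMvPowerSeries.ringHom with hφ
  set MR : Matrix (Fin (l + 1)) (Fin (l + 1)) (MvPowerSeries (Fin 2) ℂ) := M'.map φ with hMR
  have hMP : MR *ᵥ P = fun j => (↑(q j) : MvPowerSeries (Fin 2) ℂ) := by
    funext i0
    rw [← hG i0]
    simp only [Matrix.mulVec, dotProduct, hMR, Matrix.map_apply, hφ,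
      MvPolynomial.coeToMvPowerSeries.ringHom_apply]
  have h1 : MR.det • P = MR.adjugate *ᵥ (fun j => (↑(q j) : MvPowerSeries (Fin 2) ℂ)) := by
    rw [← hMP, Matrix.mulVec_mulVec, Matrix.adjugate_mul, Matrix.smul_mulVec,
      Matrix.one_mulVec]
  refine ⟨(M'.adjugate *ᵥ q) i, M'.det, ?_, ?_⟩
  · have hd : MvPolynomial.constantCoeff M'.det = 1 := by
      rw [RingHom.map_det, RingHom.mapMatrix_apply]
      have hmap : M'.map MvPolynomial.constantCoeff = 1 := by
        ext i0 j
        rw [Matrix.map_apply, hM', Matrix.of_apply, map_sum]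
        rw [Finset.sum_congr rfl (fun a _ => map_sum _ _ _)]
        rw [Finset.sum_congr rfl (fun a _ => Finset.sum_congr rfl (fun b _ => by
          rw [MvPolynomial.constantCoeff_monomial, if_congr (e_eq_zero _ _) rfl rfl]))]
        simp only [Fin.sum_univ_four, show ((0:Fin 4):ℕ) = 0 from rfl,
          show ((1:Fin 4):ℕ) = 1 from rfl, show ((2:Fin 4):ℕ) = 2 from rfl,
          show ((3:Fin 4):ℕ) = 3 from rfl]
        norm_num [Matrix.cons_val_zero]
      rw [hmap, Matrix.det_one]
    rw [show MvPolynomial.coeff 0 M'.det = MvPolynomial.constantCoeff M'.det from rfl, hd]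
    exact one_ne_zero
  · rw [aeval_eq_coe, aeval_eq_coe]
    have h3 := congrFun h1 i
    simp only [Pi.smul_apply, smul_eq_mul] at h3
    have hdet : (↑(M'.det) : MvPowerSeries (Fin 2) ℂ) = MR.det := by
      rw [← MvPolynomial.coeToMvPowerSeries.ringHom_apply, ← hφ, RingHom.map_det, RingHom.mapMatrix_apply, hMR]
    have hadj : MR.adjugate = (M'.adjugate).map φ := by
      rw [hMR, ← RingHom.mapMatrix_apply, ← RingHom.mapMatrix_apply, RingHom.map_adjugate]
    rw [hdet, h3, hadj]
    simp only [Matrix.mulVec, dotProduct, Matrix.map_apply,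
      ← MvPolynomial.coeToMvPowerSeries.ringHom_apply, ← hφ, ← _root_.map_mul, ← _root_.map_sum]
end
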